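/- arXiv:1608.08547 — 4 statements merged into one kernel-verified Lean document; each statement's English description precedes it below -/
import Mathlib

section
/- For any positive integers p, q, c, the complete bipartite graph K_{p,q} is a graph minor of the Chimera graph F(⌈q/c⌉, ⌈p/c⌉, c). -/
/-- Ceiling division `⌈a/b⌉` on naturals. -/
def ceilDiv (a b : ℕ) : ℕ := (a + b - 1) / b

/-- The Chimera graph `F(r,s,c)`: an `r × s` grid of `K_{c,c}` cells.  A vertex
`(row, col, side, idx)` has `side = false` for the "left" half of its cell and
`side = true` for the "right" half.  Within a cell the two sides are completely joined;
left vertices are joined to the corresponding left vertices of vertically adjacent cells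
and right vertices to the corresponding right vertices of horizontally adjacent cells. -/
def chimera (r s c : ℕ) : SimpleGraph (Fin r × Fin s × Bool × Fin c) where
  Adj v w :=
    (v.1 = w.1 ∧ v.2.1 = w.2.1 ∧ v.2.2.1 ≠ w.2.2.1) ∨
    (v.2.2.1 = false ∧ w.2.2.1 = false ∧ v.2.1 = w.2.1 ∧ v.2.2.2 = w.2.2.2 ∧
      ((v.1 : ℕ) + 1 = w.1 ∨ (w.1 : ℕ) + 1 = v.1)) ∨
    (v.2.2.1 = true ∧ w.2.2.1 = true ∧ v.1 = w.1 ∧ v.2.2.2 = w.2.2.2 ∧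
      ((v.2.1 : ℕ) + 1 = w.2.1 ∨ (w.2.1 : ℕ) + 1 = v.2.1))
  symm := by
    constructor
    rintro v w (⟨h1, h2, h3⟩ | ⟨h1, h2, h3, h4, h5⟩ | ⟨h1, h2, h3, h4, h5⟩)
    · exact Or.inl ⟨h1.symm, h2.symm, h3.symm⟩
    · exact Or.inr (Or.inl ⟨h2, h1, h3.symm, h4.symm, h5.symm⟩)
    · exact Or.inr (Or.inr ⟨h2, h1, h3.symm, h4.symm, h5.symm⟩)
  loopless := by
    constructor
    rintro v (⟨_, _, h⟩ | ⟨_, _, _, _, h | h⟩ | ⟨_, _, _, _, h | h⟩)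
    · exact h rfl
    all_goals omega

/-- The complete bipartite graph `K_{p,q}`. -/
def completeBipartite (p q : ℕ) : SimpleGraph (Fin p ⊕ Fin q) where
  Adj u v := u.isLeft ≠ v.isLeft
  symm := ⟨fun _ _ h => h.symm⟩
  loopless := ⟨fun _ h => h rfl⟩

/-- `G` is a minor of `G'`: each vertex of `G` maps to a nonempty connected subtree
(equivalently, connected vertex set) of `G'`, the sets for distinct vertices are disjoint,
and each edge of `G` is realized by an edge of `G'` between the corresponding sets. -/
def IsMinorOf {α β : Type*} (G : SimpleGraph α) (G' : SimpleGraph β) : Prop :=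
  ∃ φ : α → Set β,
    (∀ v, (φ v).Nonempty) ∧
    (∀ v, (G'.induce (φ v)).Connected) ∧
    (∀ u v, u ≠ v → Disjoint (φ u) (φ v)) ∧
    (∀ u v, G.Adj u v → ∃ a ∈ φ u, ∃ b ∈ φ v, G'.Adj a b)

/-- The chained-OR gadget graph `L_n`: vertices `t₁,…,t_n` (as `Sum.inl`, 0-indexed) and
`x₁,…,x_{n-1}` (as `Sum.inr`, 0-indexed), with edges `(t₁,t₂), (t₁,x₁), (t₂,x₁)` and, for
`i = 2,…,n-1`, `(x_{i-1},x_i), (x_{i-1},t_{i+1}), (x_i,t_{i+1})`. -/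
def Ln (n : ℕ) : SimpleGraph (Fin n ⊕ Fin (n - 1)) where
  Adj u v :=
    match u, v with
    | Sum.inl t, Sum.inl t' => ((t : ℕ) = 0 ∧ (t' : ℕ) = 1) ∨ ((t : ℕ) = 1 ∧ (t' : ℕ) = 0)
    | Sum.inl t, Sum.inr x =>
        ((t : ℕ) ≤ 1 ∧ (x : ℕ) = 0) ∨ (2 ≤ (t : ℕ) ∧ ((x : ℕ) + 2 = t ∨ (x : ℕ) + 1 = t))
    | Sum.inr x, Sum.inl t =>
        ((t : ℕ) ≤ 1 ∧ (x : ℕ) = 0) ∨ (2 ≤ (t : ℕ) ∧ ((x : ℕ) + 2 = t ∨ (x : ℕ) + 1 = t))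
    | Sum.inr x, Sum.inr x' => (x : ℕ) + 1 = x' ∨ (x' : ℕ) + 1 = x
  symm := by
    constructor
    rintro (t | x) (t' | x') h <;> dsimp only at h ⊢ <;> tauto
  loopless := by
    constructor
    rintro (t | x) h <;> dsimp only at h <;> omega

lemma ceilDiv_pos {n c : ℕ} (hc : 0 < c) (hn : 0 < n) : 0 < ceilDiv n c := by
  unfold ceilDiv
  exact Nat.div_pos (by omega) hc

lemma div_lt_ceilDiv {a n c : ℕ} (hc : 0 < c) (h : a < n) : a / c < ceilDiv n c := by
  unfold ceilDiv
  have h1 : a / c ≤ (n - 1) / c := Nat.div_le_div_right (by omega)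
  have h2 : (n + c - 1) / c = (n - 1) / c + 1 := by
    rw [show n + c - 1 = (n - 1) + c by omega]
    exact Nat.add_div_right _ hc
  omega

lemma chain_connected {β : Type*} (H : SimpleGraph β) (S : Set β) (n : ℕ) (hn : 0 < n)
    (f : Fin n → β) (hf : ∀ i, f i ∈ S)
    (hsurj : ∀ x ∈ S, ∃ i, f i = x)
    (hadj : ∀ k (hk : k + 1 < n), H.Adj (f ⟨k, by omega⟩) (f ⟨k + 1, hk⟩)) :
    (H.induce S).Connected := by
  have key : ∀ k (hk : k < n),
      (H.induce S).Reachable ⟨f ⟨0, hn⟩, hf _⟩ ⟨f ⟨k, hk⟩, hf _⟩ := by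
    intro k
    induction k with
    | zero => intro hk; exact SimpleGraph.Reachable.refl _
    | succ k ih =>
      intro hk
      have h1 := ih (by omega)
      have h2 : (H.induce S).Adj ⟨f ⟨k, by omega⟩, hf _⟩ ⟨f ⟨k + 1, hk⟩, hf _⟩ :=
        hadj k hk
      exact h1.trans h2.reachable
  rw [SimpleGraph.connected_iff]
  constructor
  · intro x y
    obtain ⟨i, hi⟩ := hsurj x x.2
    obtain ⟨j, hj⟩ := hsurj y y.2
    have hx : x = ⟨f i, hf i⟩ := Subtype.ext hi.symm
    have hy : y = ⟨f j, hf j⟩ := Subtype.ext hj.symm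
    rw [hx, hy]
    exact (key i.1 i.2).symm.trans (key j.1 j.2)
  · exact ⟨⟨f ⟨0, hn⟩, hf _⟩⟩

/-- For any positive integers `p`, `q`, `c`, the complete bipartite graph
`K_{p,q}` is a minor of the Chimera graph `F(⌈q/c⌉, ⌈p/c⌉, c)`. -/
theorem stmt_8 (p q c : ℕ) (hp : 0 < p) (hq : 0 < q) (hc : 0 < c) :
    IsMinorOf (completeBipartite p q) (chimera (ceilDiv q c) (ceilDiv p c) c) := by
  set r := ceilDiv q c with hrdef
  set s := ceilDiv p c with hsdef
  have hr : 0 < r := ceilDiv_pos hc hq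
  have hs : 0 < s := ceilDiv_pos hc hp
  have hip : ∀ i : Fin p, (i : ℕ) / c < s := fun i => div_lt_ceilDiv hc i.2
  have hjq : ∀ j : Fin q, (j : ℕ) / c < r := fun j => div_lt_ceilDiv hc j.2
  have hmod : ∀ a : ℕ, a % c < c := fun a => Nat.mod_lt _ hc
  refine ⟨Sum.elim
      (fun i => {v : Fin r × Fin s × Bool × Fin c |
        (v.2.1 : ℕ) = (i : ℕ) / c ∧ v.2.2.1 = false ∧ (v.2.2.2 : ℕ) = (i : ℕ) % c})
      (fun j => {v : Fin r × Fin s × Bool × Fin c |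
        (v.1 : ℕ) = (j : ℕ) / c ∧ v.2.2.1 = true ∧ (v.2.2.2 : ℕ) = (j : ℕ) % c}),
      ?_, ?_, ?_, ?_⟩
  · rintro (i | j)
    · exact ⟨(⟨0, hr⟩, ⟨(i : ℕ) / c, hip i⟩, false, ⟨(i : ℕ) % c, hmod _⟩), rfl, rfl, rfl⟩
    · exact ⟨(⟨(j : ℕ) / c, hjq j⟩, ⟨0, hs⟩, true, ⟨(j : ℕ) % c, hmod _⟩), rfl, rfl, rfl⟩
  · rintro (i | j)
    · apply chain_connected _ _ r hr
        (fun row => (row, ⟨(i : ℕ) / c, hip i⟩, false, ⟨(i : ℕ) % c, hmod _⟩))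
      · intro x
        exact ⟨rfl, rfl, rfl⟩
      · rintro ⟨a, b, sd, k⟩ ⟨h1, h2, h3⟩
        refine ⟨a, ?_⟩
        simp only at h1 h2 h3
        subst h2
        have hb : b = ⟨(i : ℕ) / c, hip i⟩ := Fin.ext h1
        have hk : k = ⟨(i : ℕ) % c, hmod _⟩ := Fin.ext h3
        rw [hb, hk]
      · intro k hk
        exact Or.inr (Or.inl ⟨rfl, rfl, rfl, rfl, Or.inl rfl⟩)
    · apply chain_connected _ _ s hs
        (fun col => (⟨(j : ℕ) / c, hjq j⟩, col, true, ⟨(j : ℕ) % c, hmod _⟩))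
      · intro x
        exact ⟨rfl, rfl, rfl⟩
      · rintro ⟨a, b, sd, k⟩ ⟨h1, h2, h3⟩
        refine ⟨b, ?_⟩
        simp only at h1 h2 h3
        subst h2
        have ha : a = ⟨(j : ℕ) / c, hjq j⟩ := Fin.ext h1
        have hk : k = ⟨(j : ℕ) % c, hmod _⟩ := Fin.ext h3
        rw [ha, hk]
      · intro k hk
        exact Or.inr (Or.inr ⟨rfl, rfl, rfl, rfl, Or.inl rfl⟩)
  · rintro (i | j) (i' | j') huv <;> rw [Set.disjoint_left] <;>
      rintro x ⟨ha1, ha2, ha3⟩ ⟨hb1, hb2, hb3⟩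
    · have d1 := Nat.div_add_mod (i : ℕ) c
      have d2 := Nat.div_add_mod (i' : ℕ) c
      have e1 : (i : ℕ) / c = (i' : ℕ) / c := ha1.symm.trans hb1
      have e2 : (i : ℕ) % c = (i' : ℕ) % c := ha3.symm.trans hb3
      have : (i : ℕ) = (i' : ℕ) := by
        rw [← Nat.div_add_mod (i : ℕ) c, ← Nat.div_add_mod (i' : ℕ) c, e1, e2]
      exact huv (congrArg Sum.inl (Fin.ext this))
    · rw [ha2] at hb2; exact Bool.noConfusion hb2
    · rw [ha2] at hb2; exact Bool.noConfusion hb2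
    · have d1 := Nat.div_add_mod (j : ℕ) c
      have d2 := Nat.div_add_mod (j' : ℕ) c
      have e1 : (j : ℕ) / c = (j' : ℕ) / c := ha1.symm.trans hb1
      have e2 : (j : ℕ) % c = (j' : ℕ) % c := ha3.symm.trans hb3
      have : (j : ℕ) = (j' : ℕ) := by
        rw [← Nat.div_add_mod (j : ℕ) c, ← Nat.div_add_mod (j' : ℕ) c, e1, e2]
      exact huv (congrArg Sum.inr (Fin.ext this))
  · rintro (i | j) (i' | j') hadj
    · exact (hadj rfl).elim
    · refine ⟨(⟨(j' : ℕ) / c, hjq j'⟩, ⟨(i : ℕ) / c, hip i⟩, false, ⟨(i : ℕ) % c, hmod _⟩),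
        ⟨rfl, rfl, rfl⟩,
        (⟨(j' : ℕ) / c, hjq j'⟩, ⟨(i : ℕ) / c, hip i⟩, true, ⟨(j' : ℕ) % c, hmod _⟩),
        ⟨rfl, rfl, rfl⟩, Or.inl ⟨rfl, rfl, (by decide : (false : Bool) ≠ true)⟩⟩
    · refine ⟨(⟨(j : ℕ) / c, hjq j⟩, ⟨(i' : ℕ) / c, hip i'⟩, true, ⟨(j : ℕ) % c, hmod _⟩),
        ⟨rfl, rfl, rfl⟩,
        (⟨(j : ℕ) / c, hjq j⟩, ⟨(i' : ℕ) / c, hip i'⟩, false, ⟨(i' : ℕ) % c, hmod _⟩),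
        ⟨rfl, rfl, rfl⟩, Or.inl ⟨rfl, rfl, (by decide : (true : Bool) ≠ false)⟩⟩
    · exact (hadj rfl).elim
end

section
/- For any positive integer n, the graph L_n is a graph minor of the Chimera graph F(⌈2n/4⌉, 2, 4). -/
lemma pair_connected {β : Type*} (G : SimpleGraph β) (S : Set β) (a b : β) (ha : a ∈ S)
    (hab : a = b ∨ G.Adj a b) (hS : ∀ x ∈ S, x = a ∨ x = b) :
    (G.induce S).Connected := by
  have key : ∀ x (hx : x ∈ S), (G.induce S).Reachable ⟨a, ha⟩ ⟨x, hx⟩ := by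
    intro x hx
    rcases hS x hx with rfl | rfl
    · exact SimpleGraph.Reachable.refl _
    · rcases hab with rfl | hadj
      · exact SimpleGraph.Reachable.refl _
      · exact SimpleGraph.Adj.reachable (by simpa using hadj)
  haveI : Nonempty S := ⟨⟨a, ha⟩⟩
  exact ⟨fun u v => ((key u.1 u.2).symm.trans (key v.1 v.2))⟩

/-- The embedding map. -/
def phi (n : ℕ) : (Fin n ⊕ Fin (n-1)) → Set (Fin (ceilDiv (2*n) 4) × Fin 2 × Bool × Fin 4) :=
  fun v w =>
    (w.2.1 : ℕ) = 0 ∧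
    match v with
    | Sum.inl t =>
        ((t : ℕ) = 0 ∧ w.2.2.1 = false ∧ (w.2.2.2 : ℕ) = 2 ∧ (w.1 : ℕ) = 0) ∨
        ((t : ℕ) % 2 = 1 ∧ w.2.2.1 = true ∧ (w.2.2.2 : ℕ) = 3 ∧ (w.1 : ℕ) = ((t : ℕ) - 1) / 2) ∨
        ((t : ℕ) ≠ 0 ∧ (t : ℕ) % 2 = 0 ∧ w.2.2.1 = true ∧ (w.2.2.2 : ℕ) = 2 ∧
          (w.1 : ℕ) = (t : ℕ) / 2 - 1)
    | Sum.inr x =>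
        ((x : ℕ) % 2 = 0 ∧ (w.2.2.2 : ℕ) = 0 ∧ (w.1 : ℕ) = (x : ℕ) / 2) ∨
        ((x : ℕ) % 2 = 1 ∧ w.2.2.1 = false ∧ (w.2.2.2 : ℕ) = (x : ℕ) % 4 ∧
          ((w.1 : ℕ) = (x : ℕ) / 2 ∨ (w.1 : ℕ) = (x : ℕ) / 2 + 1))

set_option linter.unreachableTactic false
set_option linter.unusedTactic false

/-- For any positive integer `n`, the chained-OR gadget graph `L_n` is a
minor of the Chimera graph `F(⌈2n/4⌉, 2, 4)`. -/
theorem stmt_10 (n : ℕ) (hn : 0 < n) :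
    IsMinorOf (Ln n) (chimera (ceilDiv (2 * n) 4) 2 4) := by
  refine ⟨phi n, ?_, ?_, ?_, ?_⟩
  · intro v
    rcases v with t | x
    · have ht := t.isLt
      by_cases h0 : (t : ℕ) = 0
      · exact ⟨(⟨0, by unfold ceilDiv; omega⟩, 0, false, 2), rfl, Or.inl ⟨h0, rfl, rfl, rfl⟩⟩
      · by_cases h1 : (t : ℕ) % 2 = 1
        · exact ⟨(⟨((t:ℕ)-1)/2, by unfold ceilDiv; omega⟩, 0, true, 3), rfl,
            Or.inr (Or.inl ⟨h1, rfl, rfl, rfl⟩)⟩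
        · exact ⟨(⟨(t:ℕ)/2 - 1, by unfold ceilDiv; omega⟩, 0, true, 2), rfl,
            Or.inr (Or.inr ⟨h0, by first | omega | (dsimp only; omega), rfl, rfl, rfl⟩)⟩
    · have hx := x.isLt
      by_cases h0 : (x : ℕ) % 2 = 0
      · exact ⟨(⟨(x:ℕ)/2, by unfold ceilDiv; omega⟩, 0, false, 0), rfl, Or.inl ⟨h0, rfl, rfl⟩⟩
      · exact ⟨(⟨(x:ℕ)/2, by unfold ceilDiv; omega⟩, 0, false, ⟨(x:ℕ) % 4, by first | omega | (dsimp only; omega)⟩), rfl,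
          Or.inr ⟨by first | omega | (dsimp only; omega), rfl, rfl, Or.inl rfl⟩⟩
  · intro v
    rcases v with t | x
    · have ht := t.isLt
      by_cases h0 : (t : ℕ) = 0
      · refine pair_connected _ _ (⟨0, by unfold ceilDiv; omega⟩, 0, false, 2) _
          ⟨rfl, Or.inl ⟨h0, rfl, rfl, rfl⟩⟩ (Or.inl rfl) ?_
        rintro ⟨⟨wr, hwr⟩, ⟨wc, hwc⟩, ws, ⟨wi, hwi⟩⟩ ⟨hc, (⟨_, hs, hi, hr⟩ | ⟨h1, _⟩ | ⟨h1, _⟩)⟩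
        · left
          simp only at hc hs hi hr
          subst hs
          simp only [Prod.ext_iff, Fin.ext_iff]
          refine ⟨by first | omega | (dsimp only; omega), by first | omega | (dsimp only; omega), trivial, by simpa using hi⟩
        · omega
        · omega
      · by_cases h1 : (t : ℕ) % 2 = 1
        · refine pair_connected _ _ (⟨((t:ℕ)-1)/2, by unfold ceilDiv; omega⟩, 0, true, 3) _
            ⟨rfl, Or.inr (Or.inl ⟨h1, rfl, rfl, rfl⟩)⟩ (Or.inl rfl) ?_
          rintro ⟨⟨wr, hwr⟩, ⟨wc, hwc⟩, ws, ⟨wi, hwi⟩⟩ ⟨hc, (⟨h2, _⟩ | ⟨_, hs, hi, hr⟩ | ⟨_, h2, _⟩)⟩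
          · omega
          · left
            simp only at hc hs hi hr
            subst hs
            simp only [Prod.ext_iff, Fin.ext_iff]
            refine ⟨by first | omega | (dsimp only; omega), by first | omega | (dsimp only; omega), trivial, by simpa using hi⟩
          · omega
        · refine pair_connected _ _ (⟨(t:ℕ)/2 - 1, by unfold ceilDiv; omega⟩, 0, true, 2) _
            ⟨rfl, Or.inr (Or.inr ⟨h0, by first | omega | (dsimp only; omega), rfl, rfl, rfl⟩)⟩ (Or.inl rfl) ?_
          rintro ⟨⟨wr, hwr⟩, ⟨wc, hwc⟩, ws, ⟨wi, hwi⟩⟩ ⟨hc, (⟨h2, _⟩ | ⟨h2, _⟩ | ⟨_, _, hs, hi, hr⟩)⟩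
          · omega
          · omega
          · left
            simp only at hc hs hi hr
            subst hs
            simp only [Prod.ext_iff, Fin.ext_iff]
            refine ⟨by first | omega | (dsimp only; omega), by first | omega | (dsimp only; omega), trivial, by simpa using hi⟩
    · have hx := x.isLt
      by_cases h0 : (x : ℕ) % 2 = 0
      · refine pair_connected _ _ (⟨(x:ℕ)/2, by unfold ceilDiv; omega⟩, 0, false, 0)
          (⟨(x:ℕ)/2, by unfold ceilDiv; omega⟩, 0, true, 0)
          ⟨rfl, Or.inl ⟨h0, rfl, rfl⟩⟩ (Or.inr (Or.inl ⟨rfl, rfl, by simp⟩)) ?_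
        rintro ⟨⟨wr, hwr⟩, ⟨wc, hwc⟩, ws, ⟨wi, hwi⟩⟩ ⟨hc, (⟨_, hi, hr⟩ | ⟨h2, _⟩)⟩
        · simp only at hc hi hr
          cases ws
          · left
            simp only [Prod.ext_iff, Fin.ext_iff]
            refine ⟨by first | omega | (dsimp only; omega), by first | omega | (dsimp only; omega), trivial, by simpa using hi⟩
          · right
            simp only [Prod.ext_iff, Fin.ext_iff]
            refine ⟨by first | omega | (dsimp only; omega), by first | omega | (dsimp only; omega), trivial, by simpa using hi⟩
        · omega
      · refine pair_connected _ _ (⟨(x:ℕ)/2, by unfold ceilDiv; omega⟩, 0, false, ⟨(x:ℕ)%4, by first | omega | (dsimp only; omega)⟩)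
          (⟨(x:ℕ)/2 + 1, by unfold ceilDiv; omega⟩, 0, false, ⟨(x:ℕ)%4, by first | omega | (dsimp only; omega)⟩)
          ⟨rfl, Or.inr ⟨by first | omega | (dsimp only; omega), rfl, rfl, Or.inl rfl⟩⟩
          (Or.inr (Or.inr (Or.inl ⟨rfl, rfl, rfl, rfl, Or.inl rfl⟩))) ?_
        rintro ⟨⟨wr, hwr⟩, ⟨wc, hwc⟩, ws, ⟨wi, hwi⟩⟩ ⟨hc, (⟨h2, _⟩ | ⟨_, hs, hi, hr | hr⟩)⟩
        · omega
        · left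
          simp only at hc hi hr
          subst hs
          simp only [Prod.ext_iff, Fin.ext_iff]
          refine ⟨by first | omega | (dsimp only; omega), by first | omega | (dsimp only; omega), trivial, by simpa using hi⟩
        · right
          simp only at hc hi hr
          subst hs
          simp only [Prod.ext_iff, Fin.ext_iff]
          refine ⟨by first | omega | (dsimp only; omega), by first | omega | (dsimp only; omega), trivial, by simpa using hi⟩
  · intro u v huv
    rw [Set.disjoint_left]
    rintro ⟨⟨wr, hwr⟩, ⟨wc, hwc⟩, ws, ⟨wi, hwi⟩⟩ hu hv
    rcases u with t | x <;> rcases v with t' | x'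
    · have hne : (t : ℕ) ≠ (t' : ℕ) := fun h => huv (congrArg Sum.inl (Fin.ext h))
      obtain ⟨-, h⟩ := hu
      obtain ⟨-, h'⟩ := hv
      rcases h with ⟨h1, hs, hi, hr⟩ | ⟨h1, hs, hi, hr⟩ | ⟨h1, h1', hs, hi, hr⟩ <;>
        rcases h' with ⟨h2, hs', hi', hr'⟩ | ⟨h2, hs', hi', hr'⟩ | ⟨h2, h2', hs', hi', hr'⟩ <;>
        simp only at hs hi hr hs' hi' hr' <;> first | omega | (subst hs; exact absurd hs' (by simp))
    · obtain ⟨-, h⟩ := hu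
      obtain ⟨-, h'⟩ := hv
      rcases h with ⟨h1, hs, hi, hr⟩ | ⟨h1, hs, hi, hr⟩ | ⟨h1, h1', hs, hi, hr⟩ <;>
        rcases h' with ⟨h2, hi', hr'⟩ | ⟨h2, hs', hi', hr'⟩ <;>
        simp only at hs hi hr hi' hr' <;> first | omega | (subst hs; exact absurd hs' (by simp))
    · obtain ⟨-, h⟩ := hu
      obtain ⟨-, h'⟩ := hv
      rcases h with ⟨h1, hi, hr⟩ | ⟨h1, hs, hi, hr⟩ <;>
        rcases h' with ⟨h2, hs', hi', hr'⟩ | ⟨h2, hs', hi', hr'⟩ | ⟨h2, h2', hs', hi', hr'⟩ <;>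
        simp only at hi hr hi' hr' <;> first | omega | (subst hs; exact absurd hs' (by simp))
    · have hne : (x : ℕ) ≠ (x' : ℕ) := fun h => huv (congrArg Sum.inr (Fin.ext h))
      obtain ⟨-, h⟩ := hu
      obtain ⟨-, h'⟩ := hv
      rcases h with ⟨h1, hi, hr⟩ | ⟨h1, hs, hi, hr | hr⟩ <;>
        rcases h' with ⟨h2, hi', hr'⟩ | ⟨h2, hs', hi', hr' | hr'⟩ <;>
        simp only at hi hr hi' hr' <;> omega
  · have horiz : ∀ (r1 r2 : Fin (ceilDiv (2*n) 4)) (s1 s2 : Bool) (i1 i2 : Fin 4),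
        (r1 : ℕ) = r2 → s1 ≠ s2 →
        (chimera (ceilDiv (2*n) 4) 2 4).Adj (r1, 0, s1, i1) (r2, 0, s2, i2) := by
      intro r1 r2 s1 s2 i1 i2 hr hs
      exact Or.inl ⟨Fin.ext hr, rfl, hs⟩
    intro u v hadj
    rcases u with t | x <;> rcases v with t' | x'
    · have ht := t.isLt; have ht' := t'.isLt
      rcases hadj with ⟨h0, h1⟩ | ⟨h1, h0⟩
      · exact ⟨(⟨0, by unfold ceilDiv; omega⟩, 0, false, 2), ⟨rfl, Or.inl ⟨h0, rfl, rfl, rfl⟩⟩,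
          (⟨0, by unfold ceilDiv; omega⟩, 0, true, 3),
          ⟨rfl, Or.inr (Or.inl ⟨by first | omega | (dsimp only; omega), rfl, rfl, by first | omega | (dsimp only; omega)⟩)⟩,
          horiz _ _ _ _ _ _ rfl (by simp)⟩
      · exact ⟨(⟨0, by unfold ceilDiv; omega⟩, 0, true, 3),
          ⟨rfl, Or.inr (Or.inl ⟨by first | omega | (dsimp only; omega), rfl, rfl, by first | omega | (dsimp only; omega)⟩)⟩,
          (⟨0, by unfold ceilDiv; omega⟩, 0, false, 2), ⟨rfl, Or.inl ⟨h0, rfl, rfl, rfl⟩⟩,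
          horiz _ _ _ _ _ _ rfl (by simp)⟩
    · have ht := t.isLt; have hx := x'.isLt
      rcases hadj with ⟨ht1, hx0⟩ | ⟨ht2, hxt | hxt⟩
      · by_cases h0 : (t : ℕ) = 0
        · exact ⟨(⟨0, by unfold ceilDiv; omega⟩, 0, false, 2), ⟨rfl, Or.inl ⟨h0, rfl, rfl, rfl⟩⟩,
            (⟨0, by unfold ceilDiv; omega⟩, 0, true, 0), ⟨rfl, Or.inl ⟨by first | omega | (dsimp only; omega), rfl, by first | omega | (dsimp only; omega)⟩⟩,
            horiz _ _ _ _ _ _ rfl (by simp)⟩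
        · exact ⟨(⟨0, by unfold ceilDiv; omega⟩, 0, true, 3),
            ⟨rfl, Or.inr (Or.inl ⟨by first | omega | (dsimp only; omega), rfl, rfl, by first | omega | (dsimp only; omega)⟩)⟩,
            (⟨0, by unfold ceilDiv; omega⟩, 0, false, 0),
            ⟨rfl, Or.inl ⟨by first | omega | (dsimp only; omega), rfl, by first | omega | (dsimp only; omega)⟩⟩,
            horiz _ _ _ _ _ _ rfl (by simp)⟩
      · -- x' + 2 = t, same parity
        by_cases h1 : (t : ℕ) % 2 = 1
        · exact ⟨(⟨((t:ℕ)-1)/2, by unfold ceilDiv; omega⟩, 0, true, 3),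
            ⟨rfl, Or.inr (Or.inl ⟨h1, rfl, rfl, rfl⟩)⟩,
            (⟨(x':ℕ)/2 + 1, by unfold ceilDiv; omega⟩, 0, false, ⟨(x':ℕ)%4, by first | omega | (dsimp only; omega)⟩),
            ⟨rfl, Or.inr ⟨by first | omega | (dsimp only; omega), rfl, rfl, Or.inr rfl⟩⟩,
            horiz _ _ _ _ _ _ (by first | omega | (dsimp only; omega)) (by simp)⟩
        · exact ⟨(⟨(t:ℕ)/2 - 1, by unfold ceilDiv; omega⟩, 0, true, 2),
            ⟨rfl, Or.inr (Or.inr ⟨by first | omega | (dsimp only; omega), by first | omega | (dsimp only; omega), rfl, rfl, rfl⟩)⟩,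
            (⟨(x':ℕ)/2, by unfold ceilDiv; omega⟩, 0, false, 0),
            ⟨rfl, Or.inl ⟨by first | omega | (dsimp only; omega), rfl, rfl⟩⟩,
            horiz _ _ _ _ _ _ (by first | omega | (dsimp only; omega)) (by simp)⟩
      · -- x' + 1 = t, opposite parity
        by_cases h1 : (t : ℕ) % 2 = 1
        · exact ⟨(⟨((t:ℕ)-1)/2, by unfold ceilDiv; omega⟩, 0, true, 3),
            ⟨rfl, Or.inr (Or.inl ⟨h1, rfl, rfl, rfl⟩)⟩,
            (⟨(x':ℕ)/2, by unfold ceilDiv; omega⟩, 0, false, 0),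
            ⟨rfl, Or.inl ⟨by first | omega | (dsimp only; omega), rfl, rfl⟩⟩,
            horiz _ _ _ _ _ _ (by first | omega | (dsimp only; omega)) (by simp)⟩
        · exact ⟨(⟨(t:ℕ)/2 - 1, by unfold ceilDiv; omega⟩, 0, true, 2),
            ⟨rfl, Or.inr (Or.inr ⟨by first | omega | (dsimp only; omega), by first | omega | (dsimp only; omega), rfl, rfl, rfl⟩)⟩,
            (⟨(x':ℕ)/2, by unfold ceilDiv; omega⟩, 0, false, ⟨(x':ℕ)%4, by first | omega | (dsimp only; omega)⟩),
            ⟨rfl, Or.inr ⟨by first | omega | (dsimp only; omega), rfl, rfl, Or.inl rfl⟩⟩,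
            horiz _ _ _ _ _ _ (by first | omega | (dsimp only; omega)) (by simp)⟩
    · have ht := t'.isLt; have hx := x.isLt
      rcases hadj with ⟨ht1, hx0⟩ | ⟨ht2, hxt | hxt⟩
      · by_cases h0 : (t' : ℕ) = 0
        · exact ⟨(⟨0, by unfold ceilDiv; omega⟩, 0, true, 0), ⟨rfl, Or.inl ⟨by first | omega | (dsimp only; omega), rfl, by first | omega | (dsimp only; omega)⟩⟩,
            (⟨0, by unfold ceilDiv; omega⟩, 0, false, 2), ⟨rfl, Or.inl ⟨h0, rfl, rfl, rfl⟩⟩,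
            horiz _ _ _ _ _ _ rfl (by simp)⟩
        · exact ⟨(⟨0, by unfold ceilDiv; omega⟩, 0, false, 0),
            ⟨rfl, Or.inl ⟨by first | omega | (dsimp only; omega), rfl, by first | omega | (dsimp only; omega)⟩⟩,
            (⟨0, by unfold ceilDiv; omega⟩, 0, true, 3),
            ⟨rfl, Or.inr (Or.inl ⟨by first | omega | (dsimp only; omega), rfl, rfl, by first | omega | (dsimp only; omega)⟩)⟩,
            horiz _ _ _ _ _ _ rfl (by simp)⟩
      · by_cases h1 : (t' : ℕ) % 2 = 1
        · exact ⟨(⟨(x:ℕ)/2 + 1, by unfold ceilDiv; omega⟩, 0, false, ⟨(x:ℕ)%4, by first | omega | (dsimp only; omega)⟩),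
            ⟨rfl, Or.inr ⟨by first | omega | (dsimp only; omega), rfl, rfl, Or.inr rfl⟩⟩,
            (⟨((t':ℕ)-1)/2, by unfold ceilDiv; omega⟩, 0, true, 3),
            ⟨rfl, Or.inr (Or.inl ⟨h1, rfl, rfl, rfl⟩)⟩,
            horiz _ _ _ _ _ _ (by first | omega | (dsimp only; omega)) (by simp)⟩
        · exact ⟨(⟨(x:ℕ)/2, by unfold ceilDiv; omega⟩, 0, false, 0),
            ⟨rfl, Or.inl ⟨by first | omega | (dsimp only; omega), rfl, rfl⟩⟩,
            (⟨(t':ℕ)/2 - 1, by unfold ceilDiv; omega⟩, 0, true, 2),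
            ⟨rfl, Or.inr (Or.inr ⟨by first | omega | (dsimp only; omega), by first | omega | (dsimp only; omega), rfl, rfl, rfl⟩)⟩,
            horiz _ _ _ _ _ _ (by first | omega | (dsimp only; omega)) (by simp)⟩
      · by_cases h1 : (t' : ℕ) % 2 = 1
        · exact ⟨(⟨(x:ℕ)/2, by unfold ceilDiv; omega⟩, 0, false, 0),
            ⟨rfl, Or.inl ⟨by first | omega | (dsimp only; omega), rfl, rfl⟩⟩,
            (⟨((t':ℕ)-1)/2, by unfold ceilDiv; omega⟩, 0, true, 3),
            ⟨rfl, Or.inr (Or.inl ⟨h1, rfl, rfl, rfl⟩)⟩,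
            horiz _ _ _ _ _ _ (by first | omega | (dsimp only; omega)) (by simp)⟩
        · exact ⟨(⟨(x:ℕ)/2, by unfold ceilDiv; omega⟩, 0, false, ⟨(x:ℕ)%4, by first | omega | (dsimp only; omega)⟩),
            ⟨rfl, Or.inr ⟨by first | omega | (dsimp only; omega), rfl, rfl, Or.inl rfl⟩⟩,
            (⟨(t':ℕ)/2 - 1, by unfold ceilDiv; omega⟩, 0, true, 2),
            ⟨rfl, Or.inr (Or.inr ⟨by first | omega | (dsimp only; omega), by first | omega | (dsimp only; omega), rfl, rfl, rfl⟩)⟩,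
            horiz _ _ _ _ _ _ (by first | omega | (dsimp only; omega)) (by simp)⟩
    · have hx := x.isLt; have hx' := x'.isLt
      rcases hadj with hxx | hxx
      · -- x + 1 = x'
        by_cases h0 : (x : ℕ) % 2 = 0
        · exact ⟨(⟨(x:ℕ)/2, by unfold ceilDiv; omega⟩, 0, true, 0),
            ⟨rfl, Or.inl ⟨h0, rfl, rfl⟩⟩,
            (⟨(x':ℕ)/2, by unfold ceilDiv; omega⟩, 0, false, ⟨(x':ℕ)%4, by first | omega | (dsimp only; omega)⟩),
            ⟨rfl, Or.inr ⟨by first | omega | (dsimp only; omega), rfl, rfl, Or.inl rfl⟩⟩,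
            horiz _ _ _ _ _ _ (by first | omega | (dsimp only; omega)) (by simp)⟩
        · exact ⟨(⟨(x:ℕ)/2 + 1, by unfold ceilDiv; omega⟩, 0, false, ⟨(x:ℕ)%4, by first | omega | (dsimp only; omega)⟩),
            ⟨rfl, Or.inr ⟨by first | omega | (dsimp only; omega), rfl, rfl, Or.inr rfl⟩⟩,
            (⟨(x':ℕ)/2, by unfold ceilDiv; omega⟩, 0, true, 0),
            ⟨rfl, Or.inl ⟨by first | omega | (dsimp only; omega), rfl, rfl⟩⟩,
            horiz _ _ _ _ _ _ (by first | omega | (dsimp only; omega)) (by simp)⟩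
      · -- x' + 1 = x
        by_cases h0 : (x : ℕ) % 2 = 0
        · exact ⟨(⟨(x:ℕ)/2, by unfold ceilDiv; omega⟩, 0, true, 0),
            ⟨rfl, Or.inl ⟨h0, rfl, rfl⟩⟩,
            (⟨(x':ℕ)/2 + 1, by unfold ceilDiv; omega⟩, 0, false, ⟨(x':ℕ)%4, by first | omega | (dsimp only; omega)⟩),
            ⟨rfl, Or.inr ⟨by first | omega | (dsimp only; omega), rfl, rfl, Or.inr rfl⟩⟩,
            horiz _ _ _ _ _ _ (by first | omega | (dsimp only; omega)) (by simp)⟩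
        · exact ⟨(⟨(x:ℕ)/2, by unfold ceilDiv; omega⟩, 0, false, ⟨(x:ℕ)%4, by first | omega | (dsimp only; omega)⟩),
            ⟨rfl, Or.inr ⟨by first | omega | (dsimp only; omega), rfl, rfl, Or.inl rfl⟩⟩,
            (⟨(x':ℕ)/2, by unfold ceilDiv; omega⟩, 0, true, 0),
            ⟨rfl, Or.inl ⟨by first | omega | (dsimp only; omega), rfl, rfl⟩⟩,
            horiz _ _ _ _ _ _ (by first | omega | (dsimp only; omega)) (by simp)⟩
end

section
/- The complete graph on cm+1 vertices is a minor of the Chimera graph F(m, m, c); consequently every graph on at most cm+1 vertices is a minor of F(m, m, c). -/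
namespace Stmt11Aux

lemma conn_aux {V : Type*} (G : SimpleGraph V) (S : Set V) (r : V) (hr : r ∈ S) (f : V → ℕ)
    (h : ∀ a ∈ S, a ≠ r → ∃ b ∈ S, G.Adj a b ∧ f b < f a) :
    (G.induce S).Connected := by
  rw [SimpleGraph.connected_iff]
  have key : ∀ (n : ℕ) (a : V) (ha : a ∈ S), f a ≤ n →
      (G.induce S).Reachable ⟨a, ha⟩ ⟨r, hr⟩ := by
    intro n
    induction n with
    | zero =>
      intro a ha hfa
      by_cases har : a = r
      · exact (Subtype.ext har : (⟨a, ha⟩ : S) = ⟨r, hr⟩) ▸ SimpleGraph.Reachable.refl _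
      · obtain ⟨b, hb, hab, hlt⟩ := h a ha har; omega
    | succ n ih =>
      intro a ha hfa
      by_cases har : a = r
      · exact (Subtype.ext har : (⟨a, ha⟩ : S) = ⟨r, hr⟩) ▸ SimpleGraph.Reachable.refl _
      · obtain ⟨b, hb, hab, hlt⟩ := h a ha har
        have adj : (G.induce S).Adj ⟨a, ha⟩ ⟨b, hb⟩ := hab
        exact adj.reachable.trans (ih b hb (by omega))
  refine ⟨fun x y => ?_, ⟨⟨r, hr⟩⟩⟩
  obtain ⟨x, hx⟩ := x; obtain ⟨y, hy⟩ := y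
  exact (key (f x) x hx le_rfl).trans (key (f y) y hy le_rfl).symm

variable {m c : ℕ}

/-- normal branch set for clique vertex `(k,j)`: left column `k`, rows `≥ k`,
plus right row `k`, cols `≤ k`. -/
def Bset (m c k j : ℕ) : Set (Fin m × Fin m × Bool × Fin c) :=
  {p | ((p.2.1 : ℕ) = k ∧ p.2.2.1 = false ∧ (p.2.2.2 : ℕ) = j ∧ k ≤ (p.1 : ℕ)) ∨
       ((p.1 : ℕ) = k ∧ p.2.2.1 = true ∧ (p.2.2.2 : ℕ) = j ∧ (p.2.1 : ℕ) ≤ k)}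

/-- special branch set for clique vertex `(m-1, c-1)`: its own corner vertex plus
the whole unused strictly-upper-triangular region. -/
def Sset (m c : ℕ) : Set (Fin m × Fin m × Bool × Fin c) :=
  {p | ((p.1 : ℕ) = m - 1 ∧ (p.2.1 : ℕ) = m - 1 ∧ p.2.2.1 = false ∧ (p.2.2.2 : ℕ) = c - 1) ∨
       (p.1 : ℕ) < (p.2.1 : ℕ)}

/-- the extra branch set: right side of row `m-1`, index `c-1`. -/
def Xset (m c : ℕ) : Set (Fin m × Fin m × Bool × Fin c) :=
  {p | (p.1 : ℕ) = m - 1 ∧ p.2.2.1 = true ∧ (p.2.2.2 : ℕ) = c - 1}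

lemma Bset_conn (k j : ℕ) (hk : k < m) (hj : j < c) :
    ((chimera m m c).induce (Bset m c k j)).Connected := by
  apply conn_aux (chimera m m c) (Bset m c k j)
    (((⟨k, hk⟩, ⟨k, hk⟩, false, ⟨j, hj⟩) : Fin m × Fin m × Bool × Fin c))
    (Or.inl ⟨rfl, rfl, rfl, le_rfl⟩)
    (fun p => if p.2.2.1 = false then (p.1 : ℕ) - k else k + 1 - (p.2.1 : ℕ))
  rintro ⟨⟨ar, har⟩, ⟨ac, hac⟩, as, ⟨aj, haj⟩⟩ (⟨h1, h2, h3, h4⟩ | ⟨h1, h2, h3, h4⟩) hne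
  · subst h2
    simp only at h1 h3 h4
    have hark : k < ar := by
      rcases lt_or_eq_of_le h4 with h | h
      · exact h
      · exfalso; apply hne; subst h1 h3 h
        rfl
    refine ⟨(⟨ar - 1, by omega⟩, ⟨ac, hac⟩, false, ⟨aj, haj⟩),
      Or.inl ⟨h1, rfl, h3, by simp; omega⟩, ?_, by simp; omega⟩
    exact Or.inr (Or.inl ⟨rfl, rfl, rfl, rfl, by simp; omega⟩)
  · subst h2
    simp only at h1 h3 h4
    rcases lt_or_eq_of_le h4 with h | h
    · refine ⟨(⟨ar, har⟩, ⟨ac + 1, by omega⟩, true, ⟨aj, haj⟩),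
        Or.inr ⟨h1, rfl, h3, by simp; omega⟩, ?_, by simp; omega⟩
      exact Or.inr (Or.inr ⟨rfl, rfl, rfl, rfl, by simp⟩)
    · refine ⟨(⟨k, hk⟩, ⟨k, hk⟩, false, ⟨j, hj⟩), Or.inl ⟨rfl, rfl, rfl, le_rfl⟩, ?_, ?_⟩
      · refine Or.inl ⟨?_, ?_, by simp⟩ <;> exact Fin.ext (by simp [h1, h])
      · simp; omega

lemma Xset_conn (hm : 0 < m) (hc : 0 < c) :
    ((chimera m m c).induce (Xset m c)).Connected := by
  apply conn_aux (chimera m m c) (Xset m c)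
    (((⟨m - 1, by omega⟩, ⟨0, hm⟩, true, ⟨c - 1, by omega⟩) : Fin m × Fin m × Bool × Fin c))
    (⟨rfl, rfl, rfl⟩)
    (fun p => (p.2.1 : ℕ))
  rintro ⟨⟨ar, har⟩, ⟨ac, hac⟩, as, ⟨aj, haj⟩⟩ ⟨h1, h2, h3⟩ hne
  simp only at h1 h3
  subst h1 h2 h3
  have hac0 : ac ≠ 0 := by rintro rfl; exact hne rfl
  refine ⟨(⟨m - 1, har⟩, ⟨ac - 1, by omega⟩, true, ⟨c - 1, haj⟩),
    ⟨rfl, rfl, rfl⟩, ?_, by simp; omega⟩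
  exact Or.inr (Or.inr ⟨rfl, rfl, rfl, rfl, Or.inr (by simp; omega)⟩)

lemma Sset_conn (hm : 0 < m) (hc : 0 < c) :
    ((chimera m m c).induce (Sset m c)).Connected := by
  apply conn_aux (chimera m m c) (Sset m c)
    (((⟨m - 1, by omega⟩, ⟨m - 1, by omega⟩, false, ⟨c - 1, by omega⟩) :
      Fin m × Fin m × Bool × Fin c))
    (Or.inl ⟨rfl, rfl, rfl, rfl⟩)
    (fun p => if p.2.2.1 = true then (m - (p.1 : ℕ)) + (m - 1 - (p.2.1 : ℕ))
      else if (p.2.1 : ℕ) = m - 1 ∧ (p.2.2.2 : ℕ) = c - 1 then m - 1 - (p.1 : ℕ)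
      else (m - (p.1 : ℕ)) + (m - 1 - (p.2.1 : ℕ)) + 1)
  rintro ⟨⟨ar, har⟩, ⟨ac, hac⟩, as, ⟨aj, haj⟩⟩ (⟨h1, h2, h3, h4⟩ | h) hne
  · exfalso; apply hne
    simp only at h1 h2 h4
    subst h1 h2 h3 h4
    rfl
  · simp only at h
    cases as with
    | true =>
      by_cases hc1 : ac = m - 1
      · refine ⟨(⟨ar, har⟩, ⟨ac, hac⟩, false, ⟨c - 1, by omega⟩), Or.inr h, ?_, ?_⟩
        · exact Or.inl ⟨rfl, rfl, by simp⟩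
        · simp; split_ifs <;> omega
      · refine ⟨(⟨ar, har⟩, ⟨ac + 1, by omega⟩, true, ⟨aj, haj⟩),
          Or.inr (by simp; omega), ?_, ?_⟩
        · exact Or.inr (Or.inr ⟨rfl, rfl, rfl, rfl, Or.inl (by simp)⟩)
        · simp; omega
    | false =>
      by_cases hcnd : ac = m - 1 ∧ aj = c - 1
      · refine ⟨(⟨ar + 1, by omega⟩, ⟨ac, hac⟩, false, ⟨aj, haj⟩), ?_, ?_, ?_⟩
        · by_cases h2 : ar + 1 = m - 1
          · exact Or.inl ⟨h2, hcnd.1, rfl, hcnd.2⟩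
          · exact Or.inr (by simp; omega)
        · exact Or.inr (Or.inl ⟨rfl, rfl, rfl, rfl, Or.inl (by simp)⟩)
        · simp; split_ifs <;> omega
      · refine ⟨(⟨ar, har⟩, ⟨ac, hac⟩, true, ⟨aj, haj⟩), Or.inr h, ?_, ?_⟩
        · exact Or.inl ⟨rfl, rfl, by simp⟩
        · simp; split_ifs <;> omega

lemma Bset_disj_Bset {k k' j j' : ℕ} (h : k ≠ k' ∨ j ≠ j') :
    Disjoint (Bset m c k j) (Bset m c k' j') := by
  rw [Set.disjoint_left]
  rintro p (⟨h1, h2, h3, h4⟩ | ⟨h1, h2, h3, h4⟩) (⟨g1, g2, g3, g4⟩ | ⟨g1, g2, g3, g4⟩) <;>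
    first
      | (rw [h2] at g2; exact Bool.noConfusion g2)
      | (rcases h with h | h <;> omega)

lemma Bset_disj_Sset {k j : ℕ} (hne : ¬(k = m - 1 ∧ j = c - 1)) :
    Disjoint (Bset m c k j) (Sset m c) := by
  rw [Set.disjoint_left]
  rintro p (⟨h1, h2, h3, h4⟩ | ⟨h1, h2, h3, h4⟩) (⟨g1, g2, g3, g4⟩ | g) <;>
    first
      | (rw [h2] at g3; exact Bool.noConfusion g3)
      | (first | omega | (exact hne (by omega)))

lemma Bset_disj_Xset {k j : ℕ} (hne : ¬(k = m - 1 ∧ j = c - 1)) :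
    Disjoint (Bset m c k j) (Xset m c) := by
  rw [Set.disjoint_left]
  rintro p (⟨h1, h2, h3, h4⟩ | ⟨h1, h2, h3, h4⟩) ⟨g1, g2, g3⟩ <;>
    first
      | (rw [h2] at g2; exact Bool.noConfusion g2)
      | (first | omega | (exact hne (by omega)))

lemma Sset_disj_Xset : Disjoint (Sset m c) (Xset m c) := by
  rw [Set.disjoint_left]
  rintro p (⟨h1, h2, h3, h4⟩ | h) ⟨g1, g2, g3⟩
  · rw [h3] at g2; exact Bool.noConfusion g2
  · have := p.2.1.isLt; omega

lemma edge_BB {k k' j j' : ℕ} (hk : k < m) (hk' : k' < m) (hj : j < c) (hj' : j' < c)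
    (hkk : k ≤ k') :
    ∃ a ∈ Bset m c k j, ∃ b ∈ Bset m c k' j', (chimera m m c).Adj a b :=
  ⟨(⟨k', hk'⟩, ⟨k, hk⟩, false, ⟨j, hj⟩), Or.inl ⟨rfl, rfl, rfl, hkk⟩,
   (⟨k', hk'⟩, ⟨k, hk⟩, true, ⟨j', hj'⟩), Or.inr ⟨rfl, rfl, rfl, hkk⟩,
   Or.inl ⟨rfl, rfl, by simp⟩⟩

lemma edge_BX {k j : ℕ} (hk : k < m) (hj : j < c) :
    ∃ a ∈ Bset m c k j, ∃ b ∈ Xset m c, (chimera m m c).Adj a b :=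
  ⟨(⟨m - 1, by omega⟩, ⟨k, hk⟩, false, ⟨j, hj⟩),
   Or.inl ⟨rfl, rfl, rfl, (by omega : k ≤ m - 1)⟩,
   (⟨m - 1, by omega⟩, ⟨k, hk⟩, true, ⟨c - 1, by omega⟩), ⟨rfl, rfl, rfl⟩,
   Or.inl ⟨rfl, rfl, by simp⟩⟩

lemma edge_BS {k j : ℕ} (hk : k < m) (hj : j < c) :
    ∃ a ∈ Bset m c k j, ∃ b ∈ Sset m c, (chimera m m c).Adj a b := by
  rcases Nat.lt_or_ge k (m - 1) with h | h
  · rcases Nat.eq_zero_or_pos k with rfl | hk0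
    · refine ⟨(⟨0, by omega⟩, ⟨0, by omega⟩, true, ⟨j, hj⟩), Or.inr ⟨rfl, rfl, rfl, le_rfl⟩,
        (⟨0, by omega⟩, ⟨1, by omega⟩, true, ⟨j, hj⟩), Or.inr (by simp), ?_⟩
      exact Or.inr (Or.inr ⟨rfl, rfl, rfl, rfl, Or.inl (by simp)⟩)
    · refine ⟨(⟨k, hk⟩, ⟨k, hk⟩, false, ⟨j, hj⟩), Or.inl ⟨rfl, rfl, rfl, le_rfl⟩,
        (⟨k - 1, by omega⟩, ⟨k, hk⟩, false, ⟨j, hj⟩), Or.inr (by simp; omega), ?_⟩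
      exact Or.inr (Or.inl ⟨rfl, rfl, rfl, rfl, Or.inr (by simp; omega)⟩)
  · have hk1 : k = m - 1 := by omega
    refine ⟨(⟨m - 1, by omega⟩, ⟨m - 1, by omega⟩, true, ⟨j, hj⟩),
      Or.inr ⟨hk1.symm, rfl, rfl, by omega⟩,
      (⟨m - 1, by omega⟩, ⟨m - 1, by omega⟩, false, ⟨c - 1, by omega⟩),
      Or.inl ⟨rfl, rfl, rfl, rfl⟩, ?_⟩
    exact Or.inl ⟨rfl, rfl, by simp⟩

lemma edge_SX (hm : 0 < m) (hc : 0 < c) :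
    ∃ a ∈ Sset m c, ∃ b ∈ Xset m c, (chimera m m c).Adj a b :=
  ⟨(⟨m - 1, by omega⟩, ⟨m - 1, by omega⟩, false, ⟨c - 1, by omega⟩),
    Or.inl ⟨rfl, rfl, rfl, rfl⟩,
   (⟨m - 1, by omega⟩, ⟨m - 1, by omega⟩, true, ⟨c - 1, by omega⟩), ⟨rfl, rfl, rfl⟩,
   Or.inl ⟨rfl, rfl, by simp⟩⟩

variable (m c) in
lemma clique_minor (hm : 0 < m) (hc : 0 < c) :
    IsMinorOf (⊤ : SimpleGraph (Fin (c * m + 1))) (chimera m m c) := by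
  classical
  have hval : ∀ v : Fin (c * m + 1), (v : ℕ) ≠ c * m → (v : ℕ) < c * m := by
    intro v h; have := v.isLt; omega
  have hkey : ∀ v : Fin (c * m + 1), (v : ℕ) ≠ c * m → (v : ℕ) / c < m :=
    fun v h => Nat.div_lt_of_lt_mul (hval v h)
  have hmod : ∀ v : Fin (c * m + 1), (v : ℕ) % c < c := fun v => Nat.mod_lt _ hc
  have hrec : ∀ v : Fin (c * m + 1), (v : ℕ) / c = m - 1 → (v : ℕ) % c = c - 1 →
      (v : ℕ) = c * (m - 1) + (c - 1) := by
    intro v h1 h2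
    have e := Nat.div_add_mod (v : ℕ) c
    rw [h1, h2] at e; omega
  refine ⟨fun v => if (v : ℕ) = c * m then Xset m c
    else if (v : ℕ) / c = m - 1 ∧ (v : ℕ) % c = c - 1 then Sset m c
    else Bset m c ((v : ℕ) / c) ((v : ℕ) % c), ?_, ?_, ?_, ?_⟩
  · intro v
    beta_reduce
    by_cases h1 : (v : ℕ) = c * m
    · rw [if_pos h1]
      exact ⟨(⟨m - 1, by omega⟩, ⟨0, hm⟩, true, ⟨c - 1, by omega⟩), rfl, rfl, rfl⟩
    · rw [if_neg h1]
      by_cases h2 : (v : ℕ) / c = m - 1 ∧ (v : ℕ) % c = c - 1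
      · rw [if_pos h2]
        exact ⟨(⟨m - 1, by omega⟩, ⟨m - 1, by omega⟩, false, ⟨c - 1, by omega⟩),
          Or.inl ⟨rfl, rfl, rfl, rfl⟩⟩
      · rw [if_neg h2]
        exact ⟨(⟨(v : ℕ) / c, hkey v h1⟩, ⟨(v : ℕ) / c, hkey v h1⟩, false,
          ⟨(v : ℕ) % c, hmod v⟩), Or.inl ⟨rfl, rfl, rfl, le_rfl⟩⟩
  · intro v
    beta_reduce
    by_cases h1 : (v : ℕ) = c * m
    · rw [if_pos h1]; exact Xset_conn hm hc
    · rw [if_neg h1]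
      by_cases h2 : (v : ℕ) / c = m - 1 ∧ (v : ℕ) % c = c - 1
      · rw [if_pos h2]; exact Sset_conn hm hc
      · rw [if_neg h2]; exact Bset_conn _ _ (hkey v h1) (hmod v)
  · intro u v huv
    beta_reduce
    by_cases hu1 : (u : ℕ) = c * m
    · rw [if_pos hu1]
      by_cases hv1 : (v : ℕ) = c * m
      · exact absurd (Fin.val_injective (hu1.trans hv1.symm)) huv
      · rw [if_neg hv1]
        by_cases hv2 : (v : ℕ) / c = m - 1 ∧ (v : ℕ) % c = c - 1
        · rw [if_pos hv2]; exact Sset_disj_Xset.symm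
        · rw [if_neg hv2]; exact (Bset_disj_Xset hv2).symm
    · rw [if_neg hu1]
      by_cases hu2 : (u : ℕ) / c = m - 1 ∧ (u : ℕ) % c = c - 1
      · rw [if_pos hu2]
        by_cases hv1 : (v : ℕ) = c * m
        · rw [if_pos hv1]; exact Sset_disj_Xset
        · rw [if_neg hv1]
          by_cases hv2 : (v : ℕ) / c = m - 1 ∧ (v : ℕ) % c = c - 1
          · rw [if_pos hv2]; exfalso
            exact huv (Fin.val_injective
              ((hrec u hu2.1 hu2.2).trans (hrec v hv2.1 hv2.2).symm))
          · rw [if_neg hv2]; exact (Bset_disj_Sset hv2).symm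
      · rw [if_neg hu2]
        by_cases hv1 : (v : ℕ) = c * m
        · rw [if_pos hv1]; exact Bset_disj_Xset hu2
        · rw [if_neg hv1]
          by_cases hv2 : (v : ℕ) / c = m - 1 ∧ (v : ℕ) % c = c - 1
          · rw [if_pos hv2]; exact Bset_disj_Sset hu2
          · rw [if_neg hv2]
            rcases eq_or_ne ((u : ℕ) / c) ((v : ℕ) / c) with he | he
            · rcases eq_or_ne ((u : ℕ) % c) ((v : ℕ) % c) with he' | he'
              · exfalso
                have e1 := Nat.div_add_mod (u : ℕ) c
                have e2 := Nat.div_add_mod (v : ℕ) c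
                rw [he, he'] at e1
                exact huv (Fin.val_injective (by omega))
              · exact Bset_disj_Bset (Or.inr he')
            · exact Bset_disj_Bset (Or.inl he)
  · intro u v huv
    have hne : u ≠ v := huv.ne
    beta_reduce
    by_cases hu1 : (u : ℕ) = c * m
    · rw [if_pos hu1]
      by_cases hv1 : (v : ℕ) = c * m
      · exact absurd (Fin.val_injective (hu1.trans hv1.symm)) hne
      · rw [if_neg hv1]
        by_cases hv2 : (v : ℕ) / c = m - 1 ∧ (v : ℕ) % c = c - 1
        · rw [if_pos hv2]
          obtain ⟨a, ha, b, hb, hab⟩ := edge_SX (m := m) (c := c) hm hc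
          exact ⟨b, hb, a, ha, hab.symm⟩
        · rw [if_neg hv2]
          obtain ⟨a, ha, b, hb, hab⟩ := edge_BX (hkey v hv1) (hmod v)
          exact ⟨b, hb, a, ha, hab.symm⟩
    · rw [if_neg hu1]
      by_cases hu2 : (u : ℕ) / c = m - 1 ∧ (u : ℕ) % c = c - 1
      · rw [if_pos hu2]
        by_cases hv1 : (v : ℕ) = c * m
        · rw [if_pos hv1]; exact edge_SX hm hc
        · rw [if_neg hv1]
          by_cases hv2 : (v : ℕ) / c = m - 1 ∧ (v : ℕ) % c = c - 1
          · exact absurd (Fin.val_injective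
              ((hrec u hu2.1 hu2.2).trans (hrec v hv2.1 hv2.2).symm)) hne
          · rw [if_neg hv2]
            obtain ⟨a, ha, b, hb, hab⟩ := edge_BS (hkey v hv1) (hmod v)
            exact ⟨b, hb, a, ha, hab.symm⟩
      · rw [if_neg hu2]
        by_cases hv1 : (v : ℕ) = c * m
        · rw [if_pos hv1]; exact edge_BX (hkey u hu1) (hmod u)
        · rw [if_neg hv1]
          by_cases hv2 : (v : ℕ) / c = m - 1 ∧ (v : ℕ) % c = c - 1
          · rw [if_pos hv2]; exact edge_BS (hkey u hu1) (hmod u)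
          · rw [if_neg hv2]
            rcases le_total ((u : ℕ) / c) ((v : ℕ) / c) with h | h
            · exact edge_BB (hkey u hu1) (hkey v hv1) (hmod u) (hmod v) h
            · obtain ⟨a, ha, b, hb, hab⟩ :=
                edge_BB (hkey v hv1) (hkey u hu1) (hmod v) (hmod u) h
              exact ⟨b, hb, a, ha, hab.symm⟩

end Stmt11Aux

/-- The complete graph on `c*m + 1` vertices is a minor of the Chimera graph
`F(m, m, c)`; consequently every graph on at most `c*m + 1` vertices is a minor of
`F(m, m, c)`. -/
theorem stmt_11 (m c : ℕ) (hm : 0 < m) (hc : 0 < c) :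
    IsMinorOf (⊤ : SimpleGraph (Fin (c * m + 1))) (chimera m m c) ∧
    ∀ (V : Type) [Fintype V] (G : SimpleGraph V), Fintype.card V ≤ c * m + 1 →
      IsMinorOf G (chimera m m c) := by
  refine ⟨Stmt11Aux.clique_minor m c hm hc, ?_⟩
  intro V _ G hcard
  obtain ⟨φ, h1, h2, h3, h4⟩ := Stmt11Aux.clique_minor m c hm hc
  obtain ⟨f⟩ : Nonempty (V ↪ Fin (c * m + 1)) :=
    Function.Embedding.nonempty_of_card_le (by simpa using hcard)
  refine ⟨fun v => φ (f v), fun v => h1 _, fun v => h2 _,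
    fun a b hab => h3 _ _ (fun e => hab (f.injective e)),
    fun a b hab => h4 _ _ ?_⟩
  exact (SimpleGraph.top_adj _ _).mpr fun e => hab.ne (f.injective e)
end

section
/- If G₁ is a minor of H₁ and G₂ is a minor of H₂, and G is the union of G₁ and G₂ glued along a common independent set of vertices each of which is embedded in both H₁ and H₂ with connecting edges available between the two embeddings, then placing H₁ and H₂ in disjoint row-blocks of a Chimera graph with vertical connections merging the shared vertices' subtrees yields G as a minor of the combined Chimera graph. In particular, the interaction graph I_SCP of the Ising Hamiltonian for any SCP instance with |U| = n, |S| = m is a minor of F(f₁, f₂, 4) with f₁ = O(nm²) rows and f₂ = O(m) columns. -/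
/-- A minor embedding of `G` into `G'` via a specific vertex-to-subtree map `φ`. -/
def MinorEmbedding {α β : Type*} (G : SimpleGraph α) (G' : SimpleGraph β)
    (φ : α → Set β) : Prop :=
  (∀ v, (φ v).Nonempty) ∧
  (∀ v, (G'.induce (φ v)).Connected) ∧
  (∀ u v, u ≠ v → Disjoint (φ u) (φ v)) ∧
  (∀ u v, G.Adj u v → ∃ a ∈ φ u, ∃ b ∈ φ v, G'.Adj a b)

/-- Inclusion of the first summand graph's vertices into the glued vertex set. -/
def glueL {V W₁ W₂ : Type*} : V ⊕ W₁ → V ⊕ W₁ ⊕ W₂ :=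
  Sum.elim Sum.inl (fun w => Sum.inr (Sum.inl w))

/-- Inclusion of the second summand graph's vertices into the glued vertex set. -/
def glueR {V W₁ W₂ : Type*} : V ⊕ W₂ → V ⊕ W₁ ⊕ W₂ :=
  Sum.elim Sum.inl (fun w => Sum.inr (Sum.inr w))

lemma glueL_inj {V W₁ W₂ : Type*} : Function.Injective (glueL (V := V) (W₁ := W₁) (W₂ := W₂)) := by
  rintro (v | w) (v' | w') h <;> simp [glueL] at h <;> simp [h]

lemma glueR_inj {V W₁ W₂ : Type*} : Function.Injective (glueR (V := V) (W₁ := W₁) (W₂ := W₂)) := by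
  rintro (v | w) (v' | w') h <;> simp [glueR] at h <;> simp [h]

/-- The union of two graphs `A` on `V ⊕ W₁` and `B` on `V ⊕ W₂`, glued along the common
vertex set `V`. -/
def glue {V W₁ W₂ : Type*} (A : SimpleGraph (V ⊕ W₁)) (B : SimpleGraph (V ⊕ W₂)) :
    SimpleGraph (V ⊕ W₁ ⊕ W₂) where
  Adj x y :=
    (∃ a b : V ⊕ W₁, glueL a = x ∧ glueL b = y ∧ A.Adj a b) ∨
    (∃ a b : V ⊕ W₂, glueR a = x ∧ glueR b = y ∧ B.Adj a b)
  symm := by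
    constructor
    rintro x y (⟨a, b, ha, hb, hab⟩ | ⟨a, b, ha, hb, hab⟩)
    · exact Or.inl ⟨b, a, hb, ha, hab.symm⟩
    · exact Or.inr ⟨b, a, hb, ha, hab.symm⟩
  loopless := by
    constructor
    rintro x (⟨a, b, ha, hb, hab⟩ | ⟨a, b, ha, hb, hab⟩)
    · have : a = b := glueL_inj (ha.trans hb.symm)
      exact A.loopless.irrefl _ (this ▸ hab)
    · have : a = b := glueR_inj (ha.trans hb.symm)
      exact B.loopless.irrefl _ (this ▸ hab)

section Helpers
variable {β : Type*} (G' : SimpleGraph β)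

/-- inclusion hom between induced subgraphs -/
def inclHom {S T : Set β} (h : S ⊆ T) : G'.induce S →g G'.induce T :=
  ⟨fun z => ⟨z.1, h z.2⟩, fun hadj => hadj⟩

lemma induce_connected_union {S T : Set β}
    (hS : (G'.induce S).Connected) (hT : (G'.induce T).Connected)
    {a b : β} (ha : a ∈ S) (hb : b ∈ T) (hab : a = b ∨ G'.Adj a b) :
    (G'.induce (S ∪ T)).Connected := by
  have hSsub : S ⊆ S ∪ T := Set.subset_union_left
  have hTsub : T ⊆ S ∪ T := Set.subset_union_right
  have key : ∀ x : ↑(S ∪ T), (G'.induce (S ∪ T)).Reachable x ⟨a, hSsub ha⟩ := by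
    rintro ⟨x, hx | hx⟩
    · exact (hS.preconnected ⟨x, hx⟩ ⟨a, ha⟩).map (inclHom G' hSsub)
    · have h1 : (G'.induce (S ∪ T)).Reachable ⟨x, hTsub hx⟩ ⟨b, hTsub hb⟩ :=
        (hT.preconnected ⟨x, hx⟩ ⟨b, hb⟩).map (inclHom G' hTsub)
      rcases hab with rfl | hab
      · exact h1
      · exact h1.trans ((SimpleGraph.Adj.reachable (G := G'.induce (S ∪ T))
          (by exact hab.symm : (G'.induce (S ∪ T)).Adj ⟨b, hTsub hb⟩ ⟨a, hSsub ha⟩)))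
  have : Nonempty ↑(S ∪ T) := ⟨⟨a, hSsub ha⟩⟩
  exact ⟨fun x y => (key x).trans (key y).symm⟩

lemma induce_connected_chain {S : Set β} {n : ℕ} (f : Fin (n + 1) → β)
    (hmem : ∀ i, f i ∈ S) (hsurj : ∀ x ∈ S, ∃ i, f i = x)
    (hadj : ∀ i : ℕ, (h : i + 1 ≤ n) →
      G'.Adj (f ⟨i, by omega⟩) (f ⟨i + 1, by omega⟩)) :
    (G'.induce S).Connected := by
  have key : ∀ (i : ℕ) (h : i < n + 1),
      (G'.induce S).Reachable ⟨f ⟨i, h⟩, hmem _⟩ ⟨f ⟨0, by omega⟩, hmem _⟩ := by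
    intro i
    induction i with
    | zero => intro h; rfl
    | succ i ih =>
      intro h
      have step : (G'.induce S).Adj ⟨f ⟨i+1, h⟩, hmem _⟩ ⟨f ⟨i, by omega⟩, hmem _⟩ :=
        (hadj i (by omega)).symm
      exact step.reachable.trans (ih (by omega))
  have : Nonempty ↑S := ⟨⟨f 0, hmem 0⟩⟩
  refine ⟨fun x y => ?_⟩
  obtain ⟨i, hi⟩ := hsurj x.1 x.2
  obtain ⟨j, hj⟩ := hsurj y.1 y.2
  have hx : x = ⟨f i, hmem i⟩ := Subtype.ext hi.symm
  have hy : y = ⟨f j, hmem j⟩ := Subtype.ext hj.symm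
  rw [hx, hy]
  exact (key i.1 i.2).trans (key j.1 j.2).symm

lemma connected_image {γ : Type*} {G2 : SimpleGraph γ} {S : Set β} (ι : β → γ)
    (hι : ∀ a b, a ∈ S → b ∈ S → G'.Adj a b → G2.Adj (ι a) (ι b))
    (h : (G'.induce S).Connected) : (G2.induce (ι '' S)).Connected := by
  refine h.map ⟨fun z => ⟨ι z.1, ⟨z.1, z.2, rfl⟩⟩, by
      rintro ⟨a, ha⟩ ⟨b, hb⟩ hadj
      exact hι a b ha hb hadj⟩ ?_
  rintro ⟨y, x, hx, rfl⟩
  exact ⟨⟨x, hx⟩, Subtype.ext rfl⟩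
end Helpers

section Part1
variable {r₁ r₂ s c : ℕ}

def iota1 (r₁ r₂ s c : ℕ) : Fin r₁ × Fin s × Bool × Fin c → Fin (r₁ + r₂) × Fin s × Bool × Fin c :=
  fun x => (Fin.castAdd r₂ x.1, x.2)

def iota2 (r₁ r₂ s c : ℕ) : Fin r₂ × Fin s × Bool × Fin c → Fin (r₁ + r₂) × Fin s × Bool × Fin c :=
  fun x => (Fin.natAdd r₁ x.1, x.2)

lemma chimera_adj_iff {r s c : ℕ} (v w : Fin r × Fin s × Bool × Fin c) :
    (chimera r s c).Adj v w ↔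
    (((v.1 : ℕ) = w.1 ∧ ((v.2.1 : ℕ)) = w.2.1 ∧ v.2.2.1 ≠ w.2.2.1) ∨
    (v.2.2.1 = false ∧ w.2.2.1 = false ∧ ((v.2.1 : ℕ)) = w.2.1 ∧ ((v.2.2.2 : ℕ)) = w.2.2.2 ∧
      ((v.1 : ℕ) + 1 = w.1 ∨ (w.1 : ℕ) + 1 = v.1)) ∨
    (v.2.2.1 = true ∧ w.2.2.1 = true ∧ ((v.1 : ℕ)) = w.1 ∧ ((v.2.2.2 : ℕ)) = w.2.2.2 ∧
      ((v.2.1 : ℕ) + 1 = w.2.1 ∨ (w.2.1 : ℕ) + 1 = v.2.1))) := by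
  simp [chimera, Fin.ext_iff]

lemma iota1_adj {v w : Fin r₁ × Fin s × Bool × Fin c} (h : (chimera r₁ s c).Adj v w) :
    (chimera (r₁ + r₂) s c).Adj (iota1 r₁ r₂ s c v) (iota1 r₁ r₂ s c w) := by
  rw [chimera_adj_iff] at h ⊢
  simpa [iota1] using h

lemma iota2_adj {v w : Fin r₂ × Fin s × Bool × Fin c} (h : (chimera r₂ s c).Adj v w) :
    (chimera (r₁ + r₂) s c).Adj (iota2 r₁ r₂ s c v) (iota2 r₁ r₂ s c w) := by
  rw [chimera_adj_iff] at h ⊢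
  simp only [iota2, Fin.coe_natAdd]
  rcases h with ⟨h1, h2, h3⟩ | ⟨h1, h2, h3, h4, h5⟩ | ⟨h1, h2, h3, h4, h5⟩
  · exact Or.inl ⟨by omega, h2, h3⟩
  · exact Or.inr (Or.inl ⟨h1, h2, h3, h4, by omega⟩)
  · exact Or.inr (Or.inr ⟨h1, h2, by omega, h4, h5⟩)

lemma iota1_inj : Function.Injective (iota1 r₁ r₂ s c) := by
  intro x y h
  simp only [iota1, Prod.ext_iff, Fin.ext_iff, Fin.coe_castAdd] at h ⊢
  exact h

lemma iota2_inj : Function.Injective (iota2 r₁ r₂ s c) := by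
  intro x y h
  simp only [iota2, Prod.ext_iff, Fin.ext_iff, Fin.coe_natAdd] at h ⊢
  exact ⟨by omega, h.2⟩

theorem glue_minor (V W₁ W₂ : Type) (A : SimpleGraph (V ⊕ W₁)) (B : SimpleGraph (V ⊕ W₂))
    (r₁ r₂ s c : ℕ) (hr₁ : 0 < r₁) (hr₂ : 0 < r₂)
    (φ₁ : V ⊕ W₁ → Set (Fin r₁ × Fin s × Bool × Fin c))
    (φ₂ : V ⊕ W₂ → Set (Fin r₂ × Fin s × Bool × Fin c))
    (hA : ∀ u v : V, ¬ A.Adj (Sum.inl u) (Sum.inl v))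
    (hB : ∀ u v : V, ¬ B.Adj (Sum.inl u) (Sum.inl v))
    (h₁ : MinorEmbedding A (chimera r₁ s c) φ₁)
    (h₂ : MinorEmbedding B (chimera r₂ s c) φ₂)
    (hcol : ∀ v : V, ∃ (col : Fin s) (i : Fin c),
        (⟨⟨r₁ - 1, Nat.sub_lt hr₁ Nat.one_pos⟩, col, false, i⟩ ∈ φ₁ (Sum.inl v)) ∧
        (⟨⟨0, hr₂⟩, col, false, i⟩ ∈ φ₂ (Sum.inl v))) :
    IsMinorOf (glue A B) (chimera (r₁ + r₂) s c) := by
  obtain ⟨hne₁, hconn₁, hdisj₁, hedge₁⟩ := h₁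
  obtain ⟨hne₂, hconn₂, hdisj₂, hedge₂⟩ := h₂
  set ι₁ := iota1 r₁ r₂ s c with hι₁def
  set ι₂ := iota2 r₁ r₂ s c with hι₂def
  set Φ : V ⊕ W₁ ⊕ W₂ → Set (Fin (r₁ + r₂) × Fin s × Bool × Fin c) :=
    fun u => Sum.elim (fun v => ι₁ '' φ₁ (Sum.inl v) ∪ ι₂ '' φ₂ (Sum.inl v))
      (Sum.elim (fun w => ι₁ '' φ₁ (Sum.inr w)) (fun w => ι₂ '' φ₂ (Sum.inr w))) u with hΦdef
  have hsub₁ : ∀ x : V ⊕ W₁, ι₁ '' φ₁ x ⊆ Φ (glueL x) := by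
    rintro (v | w)
    · exact Set.subset_union_left
    · exact le_refl _
  have hsub₂ : ∀ x : V ⊕ W₂, ι₂ '' φ₂ x ⊆ Φ (glueR x) := by
    rintro (v | w)
    · exact Set.subset_union_right
    · exact le_refl _
  have hcross : ∀ (P : Set (Fin r₁ × Fin s × Bool × Fin c))
      (Q : Set (Fin r₂ × Fin s × Bool × Fin c)), Disjoint (ι₁ '' P) (ι₂ '' Q) := by
    intro P Q
    rw [Set.disjoint_left]
    rintro x ⟨p, hp, rfl⟩ ⟨q, hq, hx⟩
    have := congrArg (fun z => (z.1 : ℕ)) hx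
    simp [iota1, iota2, hι₁def, hι₂def] at this
    omega
  refine ⟨Φ, ?_, ?_, ?_, ?_⟩
  · rintro (v | w | w)
    · exact ((hne₁ (Sum.inl v)).image ι₁).mono Set.subset_union_left
    · exact (hne₁ (Sum.inr w)).image ι₁
    · exact (hne₂ (Sum.inr w)).image ι₂
  · rintro (v | w | w)
    · obtain ⟨col, i, hm1, hm2⟩ := hcol v
      refine induce_connected_union _
        (connected_image _ ι₁ (fun a b _ _ h => iota1_adj h) (hconn₁ (Sum.inl v)))
        (connected_image _ ι₂ (fun a b _ _ h => iota2_adj h) (hconn₂ (Sum.inl v)))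
        ⟨_, hm1, rfl⟩ ⟨_, hm2, rfl⟩ ?_
      refine Or.inr ?_
      rw [chimera_adj_iff]
      refine Or.inr (Or.inl ⟨rfl, rfl, rfl, rfl, Or.inl ?_⟩)
      simp [iota1, iota2, hι₁def, hι₂def]
      omega
    · exact connected_image _ ι₁ (fun a b _ _ h => iota1_adj h) (hconn₁ (Sum.inr w))
    · exact connected_image _ ι₂ (fun a b _ _ h => iota2_adj h) (hconn₂ (Sum.inr w))
  · have d₁ : ∀ {x y : V ⊕ W₁}, x ≠ y → Disjoint (ι₁ '' φ₁ x) (ι₁ '' φ₁ y) :=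
      fun h => Set.disjoint_image_of_injective iota1_inj (hdisj₁ _ _ h)
    have d₂ : ∀ {x y : V ⊕ W₂}, x ≠ y → Disjoint (ι₂ '' φ₂ x) (ι₂ '' φ₂ y) :=
      fun h => Set.disjoint_image_of_injective iota2_inj (hdisj₂ _ _ h)
    rintro (u | u | u) (v | v | v) huv
    · refine Set.disjoint_union_left.2 ⟨Set.disjoint_union_right.2 ⟨?_, hcross _ _⟩,
        Set.disjoint_union_right.2 ⟨(hcross _ _).symm, ?_⟩⟩
      · exact d₁ (fun h => huv (by simpa using h))
      · exact d₂ (fun h => huv (by simpa using h))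
    · exact Set.disjoint_union_left.2 ⟨d₁ (by simp), (hcross _ _).symm⟩
    · exact Set.disjoint_union_left.2 ⟨hcross _ _, d₂ (by simp)⟩
    · exact Set.disjoint_union_right.2 ⟨d₁ (by simp), hcross _ _⟩
    · exact d₁ (fun h => huv (by simpa using h))
    · exact hcross _ _
    · exact Set.disjoint_union_right.2 ⟨(hcross _ _).symm, d₂ (by simp)⟩
    · exact (hcross _ _).symm
    · exact d₂ (fun h => huv (by simpa using h))
  · rintro u v (⟨a, b, rfl, rfl, hab⟩ | ⟨a, b, rfl, rfl, hab⟩)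
    · obtain ⟨x, hx, y, hy, hxy⟩ := hedge₁ a b hab
      exact ⟨ι₁ x, hsub₁ a ⟨x, hx, rfl⟩, ι₁ y, hsub₁ b ⟨y, hy, rfl⟩, iota1_adj hxy⟩
    · obtain ⟨x, hx, y, hy, hxy⟩ := hedge₂ a b hab
      exact ⟨ι₂ x, hsub₂ a ⟨x, hx, rfl⟩, ι₂ y, hsub₂ b ⟨y, hy, rfl⟩, iota2_adj hxy⟩
end Part1

def posOf {a b : ℕ} : Fin a ⊕ Fin b → ℕ :=
  Sum.elim (fun t => if (t : ℕ) = 0 then 0 else 2 * (t : ℕ) - 1) (fun x => 2 * (x : ℕ) + 2)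
lemma posOf_le {a : ℕ} (ha : 1 ≤ a) (j : Fin a ⊕ Fin (a - 1)) : posOf j ≤ 2 * a - 2 := by
  rcases j with t | x
  · have := t.2
    simp only [posOf, Sum.elim_inl]
    split_ifs <;> omega
  · have := x.2
    simp only [posOf, Sum.elim_inr]
    omega

lemma posOf_inj {a : ℕ} (j j' : Fin a ⊕ Fin (a - 1)) (h : posOf j = posOf j') : j = j' := by
  rcases j with t | x <;> rcases j' with t' | x' <;>
    simp only [posOf, Sum.elim_inl, Sum.elim_inr] at h
  · exact congrArg Sum.inl (Fin.ext (by split_ifs at h <;> omega))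
  · split_ifs at h <;> omega
  · split_ifs at h <;> omega
  · exact congrArg Sum.inr (Fin.ext (by omega))

lemma Ln_adj_posOf {a : ℕ} {j j' : Fin a ⊕ Fin (a - 1)} (h : (Ln a).Adj j j') :
    posOf j ≠ posOf j' ∧ posOf j ≤ posOf j' + 2 ∧ posOf j' ≤ posOf j + 2 := by
  rcases j with t | x <;> rcases j' with t' | x' <;>
    simp only [Ln] at h <;>
    simp only [posOf, Sum.elim_inl, Sum.elim_inr] <;>
    first
      | (split_ifs <;> omega)
      | omega

def rowOf (m : ℕ) {n : ℕ} (r : Fin n → ℕ)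
    (b : Σ k : Fin n, (Fin (r k) ⊕ Fin (r k - 1))) : ℕ :=
  (b.1 : ℕ) * m ^ 2 + posOf b.2

lemma posOf_sq {m n : ℕ} {r : Fin n → ℕ} (h1 : ∀ k, 1 ≤ r k)
    (h2 : ∀ k, r k ≤ m * (m - 1) / 2) {k : Fin n} (j : Fin (r k) ⊕ Fin (r k - 1)) :
    posOf j + 2 < m ^ 2 := by
  have hm2 : 2 ≤ m := by
    have ha := h1 k; have hb := h2 k
    rcases m with _ | _ | m
    · norm_num at hb; omega
    · norm_num at hb; omega
    · omega
  have hle : posOf j ≤ 2 * r k - 2 := by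
    exact posOf_le (h1 k) j
  have h2k : 2 * r k ≤ m * (m - 1) := by
    have := h2 k
    have : 2 * r k ≤ 2 * (m * (m - 1) / 2) := by omega
    have h3 : 2 * (m * (m - 1) / 2) ≤ m * (m - 1) := Nat.mul_div_le _ 2 |>.trans (le_refl _) |>.trans (le_refl _)
    omega
  have hmm : m * (m - 1) + m = m ^ 2 := by
    obtain ⟨m', rfl⟩ : ∃ m', m = m' + 2 := ⟨m - 2, by omega⟩
    have : (m' + 2) - 1 = m' + 1 := rfl
    rw [this]; ring
  have := h1 k
  omega

lemma rowOf_lt {m n : ℕ} {r : Fin n → ℕ} (h1 : ∀ k, 1 ≤ r k)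
    (h2 : ∀ k, r k ≤ m * (m - 1) / 2) (b : Σ k : Fin n, (Fin (r k) ⊕ Fin (r k - 1))) :
    rowOf m r b + 2 < n * m ^ 2 + 2 := by
  have hp := posOf_sq h1 h2 b.2
  have hk : (b.1 : ℕ) + 1 ≤ n := b.1.2
  calc rowOf m r b + 2 = (b.1 : ℕ) * m ^ 2 + (posOf b.2 + 2) := by rw [rowOf]; ring
    _ < (b.1 : ℕ) * m ^ 2 + m ^ 2 := by omega
    _ = ((b.1 : ℕ) + 1) * m ^ 2 := by ring
    _ ≤ n * m ^ 2 := Nat.mul_le_mul_right _ hk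
    _ < n * m ^ 2 + 2 := by omega

lemma rowOf_inj {m n : ℕ} {r : Fin n → ℕ} (h1 : ∀ k, 1 ≤ r k)
    (h2 : ∀ k, r k ≤ m * (m - 1) / 2) {b b' : Σ k : Fin n, (Fin (r k) ⊕ Fin (r k - 1))}
    (hne : b ≠ b') : rowOf m r b ≠ rowOf m r b' := by
  intro h
  apply hne
  have hp := posOf_sq h1 h2 b.2
  have hp' := posOf_sq h1 h2 b'.2
  have hkk : (b.1 : ℕ) = (b'.1 : ℕ) := by
    by_contra hk
    rcases Nat.lt_or_ge (b.1 : ℕ) (b'.1 : ℕ) with hlt | hge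
    · have : ((b.1 : ℕ) + 1) * m ^ 2 ≤ (b'.1 : ℕ) * m ^ 2 := Nat.mul_le_mul_right _ (by omega)
      have e : ((b.1 : ℕ) + 1) * m ^ 2 = (b.1 : ℕ) * m ^ 2 + m ^ 2 := by ring
      rw [rowOf, rowOf] at h
      omega
    · have hlt : (b'.1 : ℕ) < (b.1 : ℕ) := by omega
      have : ((b'.1 : ℕ) + 1) * m ^ 2 ≤ (b.1 : ℕ) * m ^ 2 := Nat.mul_le_mul_right _ (by omega)
      have e : ((b'.1 : ℕ) + 1) * m ^ 2 = (b'.1 : ℕ) * m ^ 2 + m ^ 2 := by ring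
      rw [rowOf, rowOf] at h
      omega
  obtain ⟨k, j⟩ := b
  obtain ⟨k', j'⟩ := b'
  have hk : k = k' := Fin.ext hkk
  subst hk
  have hpos : posOf j = posOf j' := by
    rw [rowOf, rowOf] at h
    simpa using h
  exact congrArg _ (posOf_inj j j' hpos)

lemma rowOf_near {m n : ℕ} {r : Fin n → ℕ} (k : Fin n)
    (j j' : Fin (r k) ⊕ Fin (r k - 1)) :
    rowOf m r ⟨k, j⟩ + posOf j' = rowOf m r ⟨k, j'⟩ + posOf j := by
  rw [rowOf, rowOf]; ring


lemma quad_ext {a b c : ℕ} {x y : Fin a × Fin b × Bool × Fin c}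
    (h1 : (x.1 : ℕ) = y.1) (h2 : (x.2.1 : ℕ) = y.2.1) (h3 : x.2.2.1 = y.2.2.1)
    (h4 : (x.2.2.2 : ℕ) = y.2.2.2) : x = y :=
  Prod.ext (Fin.ext h1) (Prod.ext (Fin.ext h2) (Prod.ext h3 (Fin.ext h4)))

def sChain (n m : ℕ) (i : Fin m) : Set (Fin (n*m^2+2) × Fin ((m+3)/4+2) × Bool × Fin 4) :=
  {x | ((x.2.1 : ℕ)) = (i : ℕ)/4 ∧ x.2.2.1 = false ∧ ((x.2.2.2 : ℕ)) = (i : ℕ)%4}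

def rSet (n m : ℕ) (ρ : ℕ) : Set (Fin (n*m^2+2) × Fin ((m+3)/4+2) × Bool × Fin 4) :=
  {x | ((x.1 : ℕ)) = ρ ∧ x.2.2.1 = true ∧ ((x.2.2.2 : ℕ)) = 0}

def tSet (n m : ℕ) (ρ : ℕ) : Set (Fin (n*m^2+2) × Fin ((m+3)/4+2) × Bool × Fin 4) :=
  {x | ((x.2.1 : ℕ)) = (m+3)/4 + ρ % 2 ∧ x.2.2.1 = false ∧ ((x.2.2.2 : ℕ)) = ρ/2 % 4 ∧
    ρ ≤ (x.1 : ℕ) ∧ (x.1 : ℕ) ≤ ρ + 2}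

lemma sChain_conn (n m : ℕ) (i : Fin m) :
    ((chimera (n*m^2+2) ((m+3)/4+2) 4).induce (sChain n m i)).Connected := by
  have hi := i.2
  refine induce_connected_chain _ (n := n*m^2+1)
    (fun σ => (⟨σ.1, σ.2⟩, ⟨(i : ℕ)/4, by omega⟩, false, ⟨(i : ℕ)%4, by omega⟩))
    (fun σ => ⟨rfl, rfl, rfl⟩) ?_ ?_
  · rintro ⟨⟨a, ha⟩, ⟨bb, hb⟩, bl, ⟨cc, hc⟩⟩ ⟨e1, e2, e3⟩
    dsimp at e1 e2 e3
    subst e2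
    exact ⟨⟨a, ha⟩, by refine quad_ext ?_ ?_ ?_ ?_ <;> dsimp only <;> first | rfl | omega⟩
  · intro j hj
    rw [chimera_adj_iff]
    exact Or.inr (Or.inl ⟨rfl, rfl, rfl, rfl, Or.inl rfl⟩)

lemma rSet_conn (n m : ℕ) (ρ : ℕ) (hρ : ρ < n*m^2+2) :
    ((chimera (n*m^2+2) ((m+3)/4+2) 4).induce (rSet n m ρ)).Connected := by
  refine induce_connected_chain _ (n := (m+3)/4+1)
    (fun cc => (⟨ρ, hρ⟩, ⟨cc.1, cc.2⟩, true, ⟨0, by omega⟩))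
    (fun cc => ⟨rfl, rfl, rfl⟩) ?_ ?_
  · rintro ⟨⟨a, ha⟩, ⟨bb, hb⟩, bl, ⟨cc, hc⟩⟩ ⟨e1, e2, e3⟩
    dsimp at e1 e2 e3
    subst e2
    exact ⟨⟨bb, hb⟩, by refine quad_ext ?_ ?_ ?_ ?_ <;> dsimp only <;> first | rfl | omega⟩
  · intro j hj
    rw [chimera_adj_iff]
    exact Or.inr (Or.inr ⟨rfl, rfl, rfl, rfl, Or.inl rfl⟩)

lemma tSet_conn (n m : ℕ) (ρ : ℕ) (hρ : ρ + 2 < n*m^2+2) :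
    ((chimera (n*m^2+2) ((m+3)/4+2) 4).induce (tSet n m ρ)).Connected := by
  refine induce_connected_chain _ (n := 2)
    (fun d => (⟨ρ + d.1, by have := d.2; omega⟩, ⟨(m+3)/4 + ρ % 2, by omega⟩, false,
      ⟨ρ/2 % 4, by omega⟩))
    (fun d => ⟨rfl, rfl, rfl, by simp, by have := d.2; simp; omega⟩) ?_ ?_
  · rintro ⟨⟨a, ha⟩, ⟨bb, hb⟩, bl, ⟨cc, hc⟩⟩ ⟨e1, e2, e3, e4, e5⟩
    dsimp at e1 e2 e3 e4 e5
    subst e2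
    exact ⟨⟨a - ρ, by omega⟩, by refine quad_ext ?_ ?_ ?_ ?_ <;> dsimp only <;> first | rfl | omega⟩
  · intro j hj
    rw [chimera_adj_iff]
    exact Or.inr (Or.inl ⟨rfl, rfl, rfl, rfl, Or.inl rfl⟩)

lemma rtSet_conn (n m : ℕ) (ρ : ℕ) (hρ : ρ + 2 < n*m^2+2) :
    ((chimera (n*m^2+2) ((m+3)/4+2) 4).induce (rSet n m ρ ∪ tSet n m ρ)).Connected := by
  refine induce_connected_union _ (rSet_conn n m ρ (by omega)) (tSet_conn n m ρ hρ)
    (a := (⟨ρ, by omega⟩, ⟨(m+3)/4 + ρ % 2, by omega⟩, true, ⟨0, by omega⟩))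
    (b := (⟨ρ, by omega⟩, ⟨(m+3)/4 + ρ % 2, by omega⟩, false, ⟨ρ/2 % 4, by omega⟩))
    ⟨rfl, rfl, rfl⟩ ⟨rfl, rfl, rfl, by simp, by simp⟩ ?_
  refine Or.inr ?_
  rw [chimera_adj_iff]
  exact Or.inl ⟨rfl, rfl, by simp⟩

lemma sChain_disj (n m : ℕ) {i i' : Fin m} (h : i ≠ i') :
    Disjoint (sChain n m i) (sChain n m i') := by
  rw [Set.disjoint_left]
  rintro x ⟨e1, e2, e3⟩ ⟨f1, f2, f3⟩
  have : (i : ℕ) ≠ (i' : ℕ) := fun hh => h (Fin.ext hh)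
  omega

lemma sChain_rt_disj (n m : ℕ) (i : Fin m) (ρ : ℕ) :
    Disjoint (sChain n m i) (rSet n m ρ ∪ tSet n m ρ) := by
  rw [Set.disjoint_left]
  rintro x ⟨e1, e2, e3⟩ (⟨f1, f2, f3⟩ | ⟨f1, f2, f3, f4, f5⟩)
  · rw [e2] at f2; exact absurd f2 (by simp)
  · have hi := i.2; omega

lemma rt_disj (n m : ℕ) {ρ ρ' : ℕ} (h : ρ ≠ ρ') :
    Disjoint (rSet n m ρ ∪ tSet n m ρ) (rSet n m ρ' ∪ tSet n m ρ') := by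
  rw [Set.disjoint_left]
  rintro x (⟨e1, e2, e3⟩ | ⟨e1, e2, e3, e4, e5⟩) (⟨f1, f2, f3⟩ | ⟨f1, f2, f3, f4, f5⟩)
  · omega
  · rw [e2] at f2; simp at f2
  · rw [e2] at f2; simp at f2
  · omega

theorem scp_part2 : (∃ C : ℕ, 0 < C ∧ ∀ (n m : ℕ) (r : Fin n → ℕ),
        (∀ k, 1 ≤ r k) → (∀ k, r k ≤ m * (m - 1) / 2) →
        ∀ (G : SimpleGraph ((Fin m) ⊕ (Σ k : Fin n, (Fin (r k) ⊕ Fin (r k - 1))))),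
        (∀ i j : Fin m, ¬ G.Adj (Sum.inl i) (Sum.inl j)) →
        (∀ (k : Fin n) (a b : Fin (r k) ⊕ Fin (r k - 1)),
            G.Adj (Sum.inr ⟨k, a⟩) (Sum.inr ⟨k, b⟩) ↔ (Ln (r k)).Adj a b) →
        (∀ (k k' : Fin n), k ≠ k' → ∀ a b,
            ¬ G.Adj (Sum.inr ⟨k, a⟩) (Sum.inr ⟨k', b⟩)) →
        (∀ (i : Fin m) (k : Fin n) (x : Fin (r k - 1)),
            ¬ G.Adj (Sum.inl i) (Sum.inr ⟨k, Sum.inr x⟩)) →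
        ∃ f₁ f₂ : ℕ, f₁ ≤ C * (n * m ^ 2 + 1) ∧ f₂ ≤ C * (m + 1) ∧
          IsMinorOf G (chimera f₁ f₂ 4)) := by
  refine ⟨2, by norm_num, ?_⟩
  intro n m r h1 h2 G hss hblk hsep hsx
  have hrow : ∀ b, rowOf m r b + 2 < n * m ^ 2 + 2 := fun b => rowOf_lt h1 h2 b
  refine ⟨n * m ^ 2 + 2, (m + 3) / 4 + 2, by linarith [Nat.zero_le (n * m ^ 2)],
    by omega, ?_⟩
  refine ⟨fun u => Sum.elim (fun i => sChain n m i)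
    (fun b => rSet n m (rowOf m r b) ∪ tSet n m (rowOf m r b)) u, ?_, ?_, ?_, ?_⟩
  · rintro (i | b)
    · exact ⟨(⟨0, by omega⟩, ⟨(i : ℕ) / 4, by have := i.2; omega⟩, false,
        ⟨(i : ℕ) % 4, by omega⟩), rfl, rfl, rfl⟩
    · exact ⟨(⟨rowOf m r b, by have := hrow b; omega⟩, ⟨0, by omega⟩, true, ⟨0, by omega⟩),
        Or.inl ⟨rfl, rfl, rfl⟩⟩
  · rintro (i | b)
    · exact sChain_conn n m i
    · exact rtSet_conn n m _ (hrow b)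
  · rintro (i | b) (i' | b') huv
    · exact sChain_disj n m (fun h => huv (congrArg _ h))
    · exact sChain_rt_disj n m i _
    · exact (sChain_rt_disj n m i' _).symm
    · exact rt_disj n m (rowOf_inj h1 h2 (fun h => huv (congrArg _ h)))
  · rintro (i | ⟨k, j⟩) (i' | ⟨k', j'⟩) hadj
    · exact absurd hadj (hss i i')
    · rcases j' with t | x
      · refine ⟨(⟨rowOf m r ⟨k', Sum.inl t⟩, by have := hrow ⟨k', Sum.inl t⟩; omega⟩,
          ⟨(i : ℕ) / 4, by have := i.2; omega⟩, false, ⟨(i : ℕ) % 4, by omega⟩),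
          ⟨rfl, rfl, rfl⟩,
          (⟨rowOf m r ⟨k', Sum.inl t⟩, by have := hrow ⟨k', Sum.inl t⟩; omega⟩,
          ⟨(i : ℕ) / 4, by have := i.2; omega⟩, true, ⟨0, by omega⟩),
          Or.inl ⟨rfl, rfl, rfl⟩, ?_⟩
        rw [chimera_adj_iff]
        exact Or.inl ⟨rfl, rfl, by simp⟩
      · exact absurd hadj (hsx i k' x)
    · rcases j with t | x
      · refine ⟨(⟨rowOf m r ⟨k, Sum.inl t⟩, by have := hrow ⟨k, Sum.inl t⟩; omega⟩,
          ⟨(i' : ℕ) / 4, by have := i'.2; omega⟩, true, ⟨0, by omega⟩),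
          Or.inl ⟨rfl, rfl, rfl⟩,
          (⟨rowOf m r ⟨k, Sum.inl t⟩, by have := hrow ⟨k, Sum.inl t⟩; omega⟩,
          ⟨(i' : ℕ) / 4, by have := i'.2; omega⟩, false, ⟨(i' : ℕ) % 4, by omega⟩),
          ⟨rfl, rfl, rfl⟩, ?_⟩
        rw [chimera_adj_iff]
        exact Or.inl ⟨rfl, rfl, by simp⟩
      · exact absurd hadj.symm (hsx i' k x)
    · rcases eq_or_ne k k' with rfl | hkk
      · have hLn := (hblk k j j').mp hadj
        have hpos := Ln_adj_posOf hLn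
        have hnear := rowOf_near (m := m) k j j'
        have hρ := hrow ⟨k, j⟩
        have hρ' := hrow ⟨k, j'⟩
        have hfacts : rowOf m r ⟨k, j⟩ ≠ rowOf m r ⟨k, j'⟩ ∧
            rowOf m r ⟨k, j⟩ ≤ rowOf m r ⟨k, j'⟩ + 2 ∧
            rowOf m r ⟨k, j'⟩ ≤ rowOf m r ⟨k, j⟩ + 2 := by omega
        rcases Nat.lt_or_ge (rowOf m r ⟨k, j⟩) (rowOf m r ⟨k, j'⟩) with hlt | hge
        · refine ⟨(⟨rowOf m r ⟨k, j'⟩, by omega⟩,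
            ⟨(m + 3) / 4 + rowOf m r ⟨k, j⟩ % 2, by omega⟩, false,
            ⟨rowOf m r ⟨k, j⟩ / 2 % 4, by omega⟩),
            Or.inr ⟨rfl, rfl, rfl, by dsimp only; omega, by dsimp only; omega⟩,
            (⟨rowOf m r ⟨k, j'⟩, by omega⟩,
            ⟨(m + 3) / 4 + rowOf m r ⟨k, j⟩ % 2, by omega⟩, true, ⟨0, by omega⟩),
            Or.inl ⟨rfl, rfl, rfl⟩, ?_⟩
          rw [chimera_adj_iff]
          exact Or.inl ⟨rfl, rfl, by simp⟩
        · have hlt' : rowOf m r ⟨k, j'⟩ < rowOf m r ⟨k, j⟩ := by omega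
          refine ⟨(⟨rowOf m r ⟨k, j⟩, by omega⟩,
            ⟨(m + 3) / 4 + rowOf m r ⟨k, j'⟩ % 2, by omega⟩, true, ⟨0, by omega⟩),
            Or.inl ⟨rfl, rfl, rfl⟩,
            (⟨rowOf m r ⟨k, j⟩, by omega⟩,
            ⟨(m + 3) / 4 + rowOf m r ⟨k, j'⟩ % 2, by omega⟩, false,
            ⟨rowOf m r ⟨k, j'⟩ / 2 % 4, by omega⟩),
            Or.inr ⟨rfl, rfl, rfl, by dsimp only; omega, by dsimp only; omega⟩, ?_⟩
          rw [chimera_adj_iff]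
          exact Or.inl ⟨rfl, rfl, by simp⟩
      · exact absurd hadj (hsep k k' hkk j j')

/-- (1) Gluing of minor embeddings on a Chimera graph: if `A` (on `V ⊕ W₁`)
is minor-embedded in `F(r₁,s,c)` and `B` (on `V ⊕ W₂`) in `F(r₂,s,c)`, the common vertex
set `V` is independent in both, and for each shared vertex its subtree in the first
embedding contains a left vertex in the bottom row matching (same column and index) a left
vertex in the top row of its subtree in the second embedding (so a vertical connecting edge
is available to merge the two subtrees), then the glued graph is a minor of the stacked
Chimera graph `F(r₁+r₂, s, c)`.  (2) In particular, the interaction graph `I_SCP` of the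
Ising Hamiltonian of any SCP instance with `|U| = n`, `|S| = m` — which consists of the
`s`-vertices, and for each ground element `k` a block of `r k` pair-vertices and
`r k - 1` chain-vertices forming the gadget `L_{r k}`, with the only further edges being
bipartite edges between `s`-vertices and pair-vertices — is a minor of `F(f₁, f₂, 4)` with
`f₁ = O(nm²)` rows and `f₂ = O(m)` columns. -/
theorem stmt_16 :
    (∀ (V W₁ W₂ : Type) (A : SimpleGraph (V ⊕ W₁)) (B : SimpleGraph (V ⊕ W₂))
        (r₁ r₂ s c : ℕ) (hr₁ : 0 < r₁) (hr₂ : 0 < r₂)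
        (φ₁ : V ⊕ W₁ → Set (Fin r₁ × Fin s × Bool × Fin c))
        (φ₂ : V ⊕ W₂ → Set (Fin r₂ × Fin s × Bool × Fin c)),
        (∀ u v : V, ¬ A.Adj (Sum.inl u) (Sum.inl v)) →
        (∀ u v : V, ¬ B.Adj (Sum.inl u) (Sum.inl v)) →
        MinorEmbedding A (chimera r₁ s c) φ₁ →
        MinorEmbedding B (chimera r₂ s c) φ₂ →
        (∀ v : V, ∃ (col : Fin s) (i : Fin c),
            (⟨⟨r₁ - 1, by omega⟩, col, false, i⟩ ∈ φ₁ (Sum.inl v)) ∧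
            (⟨⟨0, hr₂⟩, col, false, i⟩ ∈ φ₂ (Sum.inl v))) →
        IsMinorOf (glue A B) (chimera (r₁ + r₂) s c)) ∧
    (∃ C : ℕ, 0 < C ∧ ∀ (n m : ℕ) (r : Fin n → ℕ),
        (∀ k, 1 ≤ r k) → (∀ k, r k ≤ m * (m - 1) / 2) →
        ∀ (G : SimpleGraph ((Fin m) ⊕ (Σ k : Fin n, (Fin (r k) ⊕ Fin (r k - 1))))),
        (∀ i j : Fin m, ¬ G.Adj (Sum.inl i) (Sum.inl j)) →
        (∀ (k : Fin n) (a b : Fin (r k) ⊕ Fin (r k - 1)),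
            G.Adj (Sum.inr ⟨k, a⟩) (Sum.inr ⟨k, b⟩) ↔ (Ln (r k)).Adj a b) →
        (∀ (k k' : Fin n), k ≠ k' → ∀ a b,
            ¬ G.Adj (Sum.inr ⟨k, a⟩) (Sum.inr ⟨k', b⟩)) →
        (∀ (i : Fin m) (k : Fin n) (x : Fin (r k - 1)),
            ¬ G.Adj (Sum.inl i) (Sum.inr ⟨k, Sum.inr x⟩)) →
        ∃ f₁ f₂ : ℕ, f₁ ≤ C * (n * m ^ 2 + 1) ∧ f₂ ≤ C * (m + 1) ∧
          IsMinorOf G (chimera f₁ f₂ 4)) := by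
  constructor
  · intro V W₁ W₂ A B r₁ r₂ s c hr₁ hr₂ φ₁ φ₂ hA hB h1 h2 hcol
    exact glue_minor V W₁ W₂ A B r₁ r₂ s c hr₁ hr₂ φ₁ φ₂ hA hB h1 h2 hcol
  · exact scp_part2
end
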